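/- arXiv:2201.02224 — 4 statements merged into one kernel-verified Lean document; each statement's English description precedes it below -/
import Mathlib

section
/- Let A be a ring with enough idempotents, {N_α}_{α∈S} a family of unital right A-modules, and F a finitely presented unital left A-module. Then the natural map R_A(∏_{α∈S} N_α) ⊗_A F → ∏_{α∈S} (N_α ⊗_A F) is an isomorphism, where ∏ denotes the product of abelian groups and R_A(∏ N_α) = ⊕_{i∈I} ∏_{α∈S} N_α e_i is the product in the category of unital right A-modules. -/
open MulOpposite

universe u v w w' w₂ w₃

namespace EIMod

/-- A premodule over a nonunital ring `A`: an additive group with an associative,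
biadditive scalar multiplication. -/
class PreMod (A : Type u) (M : Type w) [NonUnitalRing A] [AddCommGroup M] extends SMul A M where
  smul_add' : ∀ (a : A) (m n : M), a • (m + n) = a • m + a • n
  add_smul' : ∀ (a b : A) (m : M), (a + b) • m = a • m + b • m
  mul_smul' : ∀ (a b : A) (m : M), (a * b) • m = a • (b • m)

namespace PreMod

variable {A : Type u} [NonUnitalRing A]

section Lemmas

variable {M : Type w} [AddCommGroup M] [PreMod A M]

lemma psmul_zero (a : A) : a • (0 : M) = 0 := by
  have h := smul_add' a (0 : M) 0
  rw [add_zero] at h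
  exact (left_eq_add.mp h)

lemma psmul_neg (a : A) (m : M) : a • (-m) = -(a • m) := by
  have h := smul_add' a m (-m)
  rw [add_neg_cancel, psmul_zero] at h
  exact (eq_neg_of_add_eq_zero_right h.symm)

lemma pzero_smul (m : M) : (0 : A) • m = 0 := by
  have h := add_smul' (0 : A) 0 m
  rw [add_zero] at h
  exact (left_eq_add.mp h)

lemma pneg_smul (a : A) (m : M) : (-a) • m = -(a • m) := by
  have h := add_smul' a (-a) m
  rw [add_neg_cancel, pzero_smul] at h
  exact (eq_neg_of_add_eq_zero_right h.symm)

/-- Scalar multiplication by a fixed `a : A` as an additive map. -/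
def smulHom (M : Type w) [AddCommGroup M] [PreMod A M] (a : A) : M →+ M :=
  AddMonoidHom.mk' (fun m => a • m) (smul_add' a)

@[simp] lemma smulHom_apply (a : A) (m : M) : smulHom M a m = a • m := rfl

end Lemmas

instance : PreMod A A where
  smul := (· * ·)
  smul_add' := mul_add
  add_smul' := add_mul
  mul_smul' := mul_assoc

lemma smul_def (a b : A) : a • b = a * b := rfl

instance : PreMod Aᵐᵒᵖ A where
  smul a x := x * a.unop
  smul_add' a m n := add_mul m n a.unop
  add_smul' a b m := by show m * (a + b).unop = m * a.unop + m * b.unop; rw [unop_add, mul_add]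
  mul_smul' a b m := by
    show m * (a * b).unop = (m * b.unop) * a.unop
    rw [unop_mul, mul_assoc]

lemma op_smul_def (a : Aᵐᵒᵖ) (x : A) : a • x = x * a.unop := rfl

instance instPi {ι : Type v} (β : ι → Type w) [∀ i, AddCommGroup (β i)]
    [∀ i, PreMod A (β i)] : PreMod A (∀ i, β i) where
  smul a f i := a • f i
  smul_add' a f g := funext fun i => smul_add' a (f i) (g i)
  add_smul' a b f := funext fun i => add_smul' a b (f i)
  mul_smul' a b f := funext fun i => mul_smul' a b (f i)

lemma pi_smul_apply {ι : Type v} {β : ι → Type w} [∀ i, AddCommGroup (β i)]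
    [∀ i, PreMod A (β i)] (a : A) (f : ∀ i, β i) (i : ι) : (a • f) i = a • f i := rfl

noncomputable instance instFinsupp {σ : Type v} : PreMod A (σ →₀ A) where
  smul a f := Finsupp.mapRange (a * ·) (mul_zero a) f
  smul_add' a f g := by
    ext s
    simp [Finsupp.mapRange_apply, mul_add]
  add_smul' a b f := by
    ext s
    simp [Finsupp.mapRange_apply, add_mul]
  mul_smul' a b f := by
    ext s
    simp [Finsupp.mapRange_apply, mul_assoc]

lemma finsupp_smul_single {σ : Type v} (a : A) (s : σ) (b : A) :
    a • (Finsupp.single s b) = Finsupp.single s (a * b) := by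
  show Finsupp.mapRange (a * ·) (mul_zero a) (Finsupp.single s b) = _
  rw [Finsupp.mapRange_single]

end PreMod

open PreMod

variable (A : Type u) [NonUnitalRing A]

/-- The additive subgroup of `A`-linear additive maps between two premodules. -/
def LHom (M : Type w) (N : Type w') [AddCommGroup M] [AddCommGroup N]
    [PreMod A M] [PreMod A N] : AddSubgroup (M →+ N) where
  carrier := {f | ∀ (a : A) (m : M), f (a • m) = a • f m}
  add_mem' := by
    intro f g hf hg a m
    simp only [AddMonoidHom.add_apply, hf a m, hg a m, PreMod.smul_add']
  zero_mem' := by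
    intro a m
    simp [PreMod.psmul_zero]
  neg_mem' := by
    intro f hf a m
    simp [hf a m, PreMod.psmul_neg]

lemma mem_LHom {M : Type w} {N : Type w'} [AddCommGroup M] [AddCommGroup N]
    [PreMod A M] [PreMod A N] (f : M →+ N) :
    f ∈ LHom A M N ↔ ∀ (a : A) (m : M), f (a • m) = a • f m := Iff.rfl

/-- A complete family of orthogonal idempotents for a nonunital ring:
`A` is a ring with enough idempotents. -/
class EnoughIdems {I : Type v} (e : I → A) : Prop where
  idem : ∀ i, e i * e i = e i
  orth : ∀ i j, i ≠ j → e i * e j = 0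
  memLeft : ∀ a : A, a ∈ AddSubgroup.closure {x : A | ∃ i b, x = e i * b}
  memRight : ∀ a : A, a ∈ AddSubgroup.closure {x : A | ∃ i b, x = b * e i}

section OpInstance

variable {A}

lemma op_mem_closure {s : Set A} {t : Set Aᵐᵒᵖ} (hst : ∀ x ∈ s, op x ∈ t) {a : A}
    (ha : a ∈ AddSubgroup.closure s) : op a ∈ AddSubgroup.closure t := by
  refine AddSubgroup.closure_induction
    (fun x hx => AddSubgroup.subset_closure (hst x hx)) (by rw [op_zero]; exact zero_mem _)
    (fun x y _ _ hx hy => by rw [op_add]; exact add_mem hx hy)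
    (fun x _ hx => by rw [op_neg]; exact neg_mem hx) ha

lemma unop_mem_closure {s : Set Aᵐᵒᵖ} {t : Set A} (hst : ∀ x ∈ s, unop x ∈ t) {a : Aᵐᵒᵖ}
    (ha : a ∈ AddSubgroup.closure s) : unop a ∈ AddSubgroup.closure t := by
  refine AddSubgroup.closure_induction
    (fun x hx => AddSubgroup.subset_closure (hst x hx)) (by rw [unop_zero]; exact zero_mem _)
    (fun x y _ _ hx hy => by rw [unop_add]; exact add_mem hx hy)
    (fun x _ hx => by rw [unop_neg]; exact neg_mem hx) ha

instance EnoughIdems.instOp {I : Type v} (e : I → A) [EnoughIdems A e] :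
    EnoughIdems Aᵐᵒᵖ (fun i => op (e i)) where
  idem i := by rw [← op_mul, idem (e := e) i]
  orth i j h := by
    rw [← op_mul, orth (e := e) j i (Ne.symm h), op_zero]
  memLeft a := by
    have := op_mem_closure (s := {x : A | ∃ i b, x = b * e i})
      (t := {x : Aᵐᵒᵖ | ∃ i b, x = op (e i) * b}) ?_ (memRight (e := e) a.unop)
    · simpa using this
    · rintro x ⟨i, b, rfl⟩
      exact ⟨i, op b, by rw [← op_mul]⟩
  memRight a := by
    have := op_mem_closure (s := {x : A | ∃ i b, x = e i * b})
      (t := {x : Aᵐᵒᵖ | ∃ i b, x = b * op (e i)}) ?_ (memLeft (e := e) a.unop)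
    · simpa using this
    · rintro x ⟨i, b, rfl⟩
      exact ⟨i, op b, by rw [← op_mul]⟩

end OpInstance

section RA

variable {I : Type v} (e : I → A)

/-- `R_A(M) = ⊕ᵢ eᵢ M`, the largest unital submodule of a premodule `M`. -/
def RA (M : Type w) [AddCommGroup M] [PreMod A M] : AddSubgroup M :=
  AddSubgroup.closure {x : M | ∃ (i : I) (y : M), x = e i • y}

variable {M : Type w} [AddCommGroup M] [PreMod A M]

lemma smul_mem_RA [EnoughIdems A e] (a : A) {m : M} (hm : m ∈ RA A e M) :
    a • m ∈ RA A e M := by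
  have key : ∀ b : A, b ∈ AddSubgroup.closure {x : A | ∃ i c, x = e i * c} →
      ∀ y : M, b • y ∈ RA A e M := by
    intro b hb
    refine AddSubgroup.closure_induction ?_ ?_ ?_ ?_ hb
    · rintro x ⟨i, c, rfl⟩ y
      rw [PreMod.mul_smul']
      exact AddSubgroup.subset_closure ⟨i, c • y, rfl⟩
    · intro y
      rw [PreMod.pzero_smul]
      exact zero_mem _
    · intro x y _ _ hx hy z
      rw [PreMod.add_smul']
      exact add_mem (hx z) (hy z)
    · intro x _ hx y
      rw [PreMod.pneg_smul]
      exact neg_mem (hx y)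
  refine AddSubgroup.closure_induction ?_ ?_ ?_ ?_ hm
  · rintro x ⟨i, y, rfl⟩
    rw [← PreMod.mul_smul']
    exact key _ (EnoughIdems.memLeft (e := e) (a * e i)) y
  · rw [PreMod.psmul_zero]
    exact zero_mem _
  · intro x y _ _ hx hy
    rw [PreMod.smul_add']
    exact add_mem hx hy
  · intro x _ hx
    rw [PreMod.psmul_neg]
    exact neg_mem hx

instance RA.instPreMod [EnoughIdems A e] : PreMod A ↥(RA A e M) where
  smul a x := ⟨a • x.1, smul_mem_RA A e a x.2⟩
  smul_add' a x y := Subtype.ext (PreMod.smul_add' a x.1 y.1)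
  add_smul' a b x := Subtype.ext (PreMod.add_smul' a b x.1)
  mul_smul' a b x := Subtype.ext (PreMod.mul_smul' a b x.1)

lemma RA.coe_smul [EnoughIdems A e] (a : A) (x : ↥(RA A e M)) :
    ((a • x : ↥(RA A e M)) : M) = a • (x : M) := rfl

/-- A premodule is unital when it coincides with its largest unital submodule. -/
def IsUnital (M : Type w) [AddCommGroup M] [PreMod A M] : Prop :=
  ∀ m : M, m ∈ RA A e M

end RA

section Ideals

/-- The left ideal `A·u = {x | x·u = x}` (for `u` idempotent), as a left premodule. -/
def rIdl (u : A) : AddSubgroup A where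
  carrier := {x | x * u = x}
  zero_mem' := zero_mul u
  add_mem' := by
    intro x y hx hy
    show (x + y) * u = x + y
    rw [add_mul, hx, hy]
  neg_mem' := by
    intro x hx
    show (-x) * u = -x
    rw [neg_mul, hx]

instance rIdl.instPreMod (u : A) : PreMod A ↥(rIdl A u) where
  smul a x := ⟨a * x.1, by
    have hx : x.1 * u = x.1 := x.2
    show (a * x.1) * u = a * x.1
    rw [mul_assoc, hx]⟩
  smul_add' a x y := Subtype.ext (mul_add a x.1 y.1)
  add_smul' a b x := Subtype.ext (add_mul a b x.1)
  mul_smul' a b x := Subtype.ext (mul_assoc a b x.1)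

/-- The right ideal `u·A = {x | u·x = x}` (for `u` idempotent), as a right premodule. -/
def eIdl (u : A) : AddSubgroup A where
  carrier := {x | u * x = x}
  zero_mem' := mul_zero u
  add_mem' := by
    intro x y hx hy
    show u * (x + y) = x + y
    rw [mul_add, hx, hy]
  neg_mem' := by
    intro x hx
    show u * (-x) = -x
    rw [mul_neg, hx]

instance eIdl.instPreMod (u : A) : PreMod Aᵐᵒᵖ ↥(eIdl A u) where
  smul a x := ⟨x.1 * a.unop, by
    have hx : u * x.1 = x.1 := x.2
    show u * (x.1 * a.unop) = x.1 * a.unop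
    rw [← mul_assoc, hx]⟩
  smul_add' a x y := Subtype.ext (add_mul x.1 y.1 a.unop)
  add_smul' a b x := Subtype.ext (by show x.1 * (a + b).unop = x.1 * a.unop + x.1 * b.unop; rw [unop_add, mul_add])
  mul_smul' a b x := Subtype.ext (by show x.1 * (a * b).unop = (x.1 * b.unop) * a.unop; rw [unop_mul, mul_assoc])

/-- The image `u•M` of scalar multiplication by `u`, as an additive subgroup. -/
def eSMulRange (u : A) (M : Type w) [AddCommGroup M] [PreMod A M] : AddSubgroup M :=
  (PreMod.smulHom M u).range

end Ideals

end EIMod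
namespace EIMod

open PreMod MulOpposite

section Tensor

variable (A : Type u) [NonUnitalRing A]
variable (N : Type w) [AddCommGroup N] [PreMod Aᵐᵒᵖ N]
variable (M : Type w') [AddCommGroup M] [PreMod A M]

/-- Bilinearity and balancing relations defining the tensor product `N ⊗_A M`. -/
def TensorRels : AddSubgroup (FreeAbelianGroup (N × M)) :=
  AddSubgroup.closure
    ({z | ∃ (n₁ : N) (n₂ : N) (m : M), z = FreeAbelianGroup.of (n₁ + n₂, m)
        - FreeAbelianGroup.of (n₁, m) - FreeAbelianGroup.of (n₂, m)} ∪
     {z | ∃ (n : N) (m₁ : M) (m₂ : M), z = FreeAbelianGroup.of (n, m₁ + m₂)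
        - FreeAbelianGroup.of (n, m₁) - FreeAbelianGroup.of (n, m₂)} ∪
     {z | ∃ (n : N) (a : A) (m : M), z = FreeAbelianGroup.of (op a • n, m)
        - FreeAbelianGroup.of (n, a • m)})

/-- The tensor product `N ⊗_A M` of a right `A`-premodule and a left `A`-premodule. -/
def Tensor : Type max w w' := FreeAbelianGroup (N × M) ⧸ TensorRels A N M

instance : AddCommGroup (Tensor A N M) :=
  inferInstanceAs (AddCommGroup (FreeAbelianGroup (N × M) ⧸ TensorRels A N M))

/-- The canonical generator `n ⊗ m` of `N ⊗_A M`. -/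
def Tensor.mk (n : N) (m : M) : Tensor A N M :=
  QuotientAddGroup.mk (FreeAbelianGroup.of (n, m))

variable {A N M}
variable {N' : Type w₂} [AddCommGroup N'] [PreMod Aᵐᵒᵖ N']
variable {M' : Type w₃} [AddCommGroup M'] [PreMod A M']

/-- Functoriality of the tensor product in both variables, with respect to `A`-linear maps. -/
noncomputable def Tensor.map (f : N →+ N') (g : M →+ M')
    (hf : ∀ (a : A) (n : N), f (op a • n) = op a • f n)
    (hg : ∀ (a : A) (m : M), g (a • m) = a • g m) :
    Tensor A N M →+ Tensor A N' M' :=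
  QuotientAddGroup.map _ _ (FreeAbelianGroup.lift fun p => FreeAbelianGroup.of (f p.1, g p.2))
    (by
      refine (AddSubgroup.closure_le _).mpr ?_
      rintro z ((⟨n₁, n₂, m, rfl⟩ | ⟨n, m₁, m₂, rfl⟩) | ⟨n, a, m, rfl⟩) <;>
        refine AddSubgroup.mem_comap.mpr ?_
      · rw [map_sub, map_sub, FreeAbelianGroup.lift_apply_of, FreeAbelianGroup.lift_apply_of,
          FreeAbelianGroup.lift_apply_of]
        exact AddSubgroup.subset_closure
          (Or.inl (Or.inl ⟨f n₁, f n₂, g m, by rw [map_add]⟩))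
      · rw [map_sub, map_sub, FreeAbelianGroup.lift_apply_of, FreeAbelianGroup.lift_apply_of,
          FreeAbelianGroup.lift_apply_of]
        exact AddSubgroup.subset_closure
          (Or.inl (Or.inr ⟨f n, g m₁, g m₂, by rw [map_add]⟩))
      · rw [map_sub, FreeAbelianGroup.lift_apply_of, FreeAbelianGroup.lift_apply_of]
        exact AddSubgroup.subset_closure
          (Or.inr ⟨f n, a, g m, by rw [hf, hg]⟩))

lemma Tensor.map_mk (f : N →+ N') (g : M →+ M')
    (hf : ∀ (a : A) (n : N), f (op a • n) = op a • f n)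
    (hg : ∀ (a : A) (m : M), g (a • m) = a • g m) (n : N) (m : M) :
    Tensor.map f g hf hg (Tensor.mk A N M n m) = Tensor.mk A N' M' (f n) (g m) := by
  show QuotientAddGroup.mk (s := TensorRels A N' M')
    ((FreeAbelianGroup.lift fun p => FreeAbelianGroup.of (f p.1, g p.2))
      (FreeAbelianGroup.of (n, m))) = _
  rw [FreeAbelianGroup.lift_apply_of]
  rfl

end Tensor

section TorExt

variable (A : Type u) [NonUnitalRing A] {I : Type v} (e : I → A)
variable (M : Type w) [AddCommGroup M] [PreMod A M]

/-- The canonical `A`-linear surjection from the canonical free cover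
`(I × M) →₀ A` onto a unital module `M`, `single (i, m) a ↦ (a·eᵢ)·m`. -/
noncomputable def covHom : ((I × M) →₀ A) →+ M :=
  Finsupp.liftAddHom (fun p =>
    AddMonoidHom.mk' (fun a => (a * e p.1) • p.2)
      (fun a b => by
        show ((a + b) * e p.1) • p.2 = (a * e p.1) • p.2 + (b * e p.1) • p.2
        rw [add_mul, PreMod.add_smul']))

lemma covHom_single (p : I × M) (a : A) :
    covHom A e M (Finsupp.single p a) = (a * e p.1) • p.2 := by
  rw [covHom, Finsupp.liftAddHom_apply_single]
  rfl

lemma covHom_linear (a : A) (f : (I × M) →₀ A) :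
    covHom A e M (a • f) = a • covHom A e M f := by
  induction f using Finsupp.induction with
  | zero => rw [PreMod.psmul_zero, map_zero, PreMod.psmul_zero]
  | single_add p b f _ _ ih =>
    rw [PreMod.smul_add', map_add, map_add, PreMod.smul_add', ih,
      PreMod.finsupp_smul_single, covHom_single, covHom_single, mul_assoc,
      PreMod.mul_smul']

/-- The first syzygy of the canonical free cover of `M`. -/
noncomputable def KK : AddSubgroup ((I × M) →₀ A) := (covHom A e M).ker

noncomputable instance KK.instPreMod : PreMod A ↥(KK A e M) where
  smul a x := ⟨a • x.1, by
    have hx : covHom A e M x.1 = 0 := x.2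
    show covHom A e M (a • x.1) = 0
    rw [covHom_linear, hx, PreMod.psmul_zero]⟩
  smul_add' a x y := Subtype.ext (PreMod.smul_add' a x.1 y.1)
  add_smul' a b x := Subtype.ext (PreMod.add_smul' a b x.1)
  mul_smul' a b x := Subtype.ext (PreMod.mul_smul' a b x.1)

variable (N : Type w') [AddCommGroup N] [PreMod Aᵐᵒᵖ N]

/-- The map `N ⊗_A K → N ⊗_A (⊕ A·eᵢ)` induced by the first syzygy of `M`. -/
noncomputable def torMap : Tensor A N ↥(KK A e M) →+ Tensor A N ((I × M) →₀ A) :=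
  Tensor.map (AddMonoidHom.id N) ((KK A e M).subtype) (fun _ _ => rfl) (fun _ _ => rfl)

/-- `Tor₁^A(N, M)`, computed using the canonical free presentation of `M`. -/
noncomputable def Tor1 : AddSubgroup (Tensor A N ↥(KK A e M)) := (torMap A e M N).ker

variable (X : Type w') [AddCommGroup X] [PreMod A X]

/-- Restriction of `A`-linear maps along the inclusion of the first syzygy of `M`. -/
noncomputable def resHom :
    ↥(LHom A ((I × M) →₀ A) X) →+ ↥(LHom A ↥(KK A e M) X) :=
  AddMonoidHom.mk'
    (fun g => ⟨((g : ((I × M) →₀ A) →+ X)).comp (KK A e M).subtype,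
      fun a k => (g.2 : ∀ (a : A) (y : (I × M) →₀ A), (g : ((I × M) →₀ A) →+ X) (a • y)
        = a • (g : ((I × M) →₀ A) →+ X) y) a k.1⟩)
    (fun g g' => Subtype.ext (AddMonoidHom.ext (fun k => rfl)))

/-- `Ext¹_A(M, X)`, computed using the canonical free presentation of `M`. -/
noncomputable def Ext1 :=
  (↥(LHom A ↥(KK A e M) X)) ⧸ (resHom A e M X).range

noncomputable instance : AddCommGroup (Ext1 A e M X) :=
  inferInstanceAs (AddCommGroup ((↥(LHom A ↥(KK A e M) X)) ⧸ (resHom A e M X).range))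

end TorExt

section Character

/-- The divisible group `ℚ/ℤ`. -/
abbrev QZ : Type := AddCircle (1 : ℚ)

variable (A : Type u) [NonUnitalRing A] {I : Type v} (e : I → A)
variable (N : Type w) [AddCommGroup N] [PreMod Aᵐᵒᵖ N]

/-- The full character premodule `Hom_ℤ(N, ℚ/ℤ)` of a right `A`-premodule `N`,
with action `(a·f)(n) = f(n·a)`. -/
instance instCharPreMod : PreMod A (N →+ QZ) where
  smul a f := f.comp (PreMod.smulHom N (op a))
  smul_add' a f g := by
    show (f + g).comp _ = f.comp _ + g.comp _
    rw [AddMonoidHom.add_comp]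
  add_smul' a b f := by
    ext n
    show f (op (a + b) • n) = f (op a • n) + f (op b • n)
    rw [op_add, PreMod.add_smul', map_add]
  mul_smul' a b f := by
    ext n
    show f (op (a * b) • n) = f (op b • (op a • n))
    rw [op_mul, PreMod.mul_smul']

lemma char_smul_apply (a : A) (f : N →+ QZ) (n : N) :
    (a • f) n = f (op a • n) := rfl

/-- The unital character module `N⁺ = ⊕ᵢ Hom_ℤ(N·eᵢ, ℚ/ℤ) = R_A(Hom_ℤ(N, ℚ/ℤ))`. -/
noncomputable abbrev CharMod [EnoughIdems A e] : Type w :=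
  ↥(RA A e (N →+ QZ))

end Character

section FPn

variable (A : Type u) [NonUnitalRing A] {I : Type v} (e : I → A)

/-- A finite direct sum of standard left ideals `A·u j`. -/
abbrev FinFree {k : ℕ} (u : Fin k → A) : Type u := ∀ j : Fin k, ↥(rIdl A (u j))

/-- A left premodule over a ring with enough idempotents is of type `FPₙ` if it admits an
exact resolution `Pₙ → ⋯ → P₀ → F → 0` whose terms are finite direct sums of the standard
projective modules `A·eᵢ`. -/
def IsFPn (n : ℕ) (F : Type w) [AddCommGroup F] [PreMod A F] : Prop :=
  ∃ (k : ℕ → ℕ) (ι : ∀ s : ℕ, Fin (k s) → I)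
    (d : ∀ s : ℕ, ↥(LHom A (FinFree A fun j => e (ι (s + 1) j))
          (FinFree A fun j => e (ι s j))))
    (g : ↥(LHom A (FinFree A fun j => e (ι 0 j)) F)),
    Function.Surjective ⇑(g : (FinFree A fun j => e (ι 0 j)) →+ F) ∧
    (0 < n → AddMonoidHom.range
        ((d 0 : (FinFree A fun j => e (ι 1 j)) →+ (FinFree A fun j => e (ι 0 j))))
      = AddMonoidHom.ker (g : (FinFree A fun j => e (ι 0 j)) →+ F)) ∧
    (∀ s : ℕ, s + 1 < n → AddMonoidHom.range
        ((d (s + 1) : (FinFree A fun j => e (ι (s + 2) j)) →+ (FinFree A fun j => e (ι (s + 1) j))))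
      = AddMonoidHom.ker
        ((d s : (FinFree A fun j => e (ι (s + 1) j)) →+ (FinFree A fun j => e (ι s j)))))

end FPn

end EIMod

open EIMod PreMod MulOpposite

set_option maxHeartbeats 1000000

/-- The canonical map `R_A(∏_α N_α) ⊗_A F → N_α ⊗_A F` induced by the `α`-th projection. -/
noncomputable def projTensor
    (A : Type u) [NonUnitalRing A] {I : Type v} (e : I → A) [EnoughIdems A e]
    (S : Type w) (N : S → Type u) [∀ α, AddCommGroup (N α)] [∀ α, PreMod Aᵐᵒᵖ (N α)]
    (F : Type u) [AddCommGroup F] [PreMod A F] (α : S) :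
    Tensor A (↥(RA Aᵐᵒᵖ (fun i => op (e i)) (∀ β, N β))) F →+ Tensor A (N α) F :=
  Tensor.map (A := A) (N' := N α)
    (AddMonoidHom.mk' (fun x : ↥(RA Aᵐᵒᵖ (fun i => op (e i)) (∀ β, N β)) => (x : ∀ β, N β) α)
      (fun x y => rfl))
    (AddMonoidHom.id F) (fun a n => by rfl) (fun a m => by rfl)

section TensorAux

variable {A : Type u} [NonUnitalRing A]
variable {N : Type w} [AddCommGroup N] [PreMod Aᵐᵒᵖ N]
variable {M : Type u} [AddCommGroup M] [PreMod A M]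

/-- Induction principle for the tensor product. -/
theorem tensor_ind {P : Tensor A N M → Prop} (h0 : P 0)
    (hmk : ∀ n m, P (Tensor.mk A N M n m)) (hneg : ∀ z, P z → P (-z))
    (hadd : ∀ z w, P z → P w → P (z + w)) (z : Tensor A N M) : P z := by
  refine QuotientAddGroup.induction_on z fun x => ?_
  refine FreeAbelianGroup.induction_on x ?_ (fun p => hmk p.1 p.2) ?_ ?_
  · rw [QuotientAddGroup.mk_zero]
    exact h0
  · intro p hp
    rw [QuotientAddGroup.mk_neg]
    exact hneg _ hp
  · intro a b ha hb
    rw [QuotientAddGroup.mk_add]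
    exact hadd _ _ ha hb

theorem tensor_mk_add_left (n₁ n₂ : N) (m : M) :
    Tensor.mk A N M (n₁ + n₂) m = Tensor.mk A N M n₁ m + Tensor.mk A N M n₂ m := by
  have h : (QuotientAddGroup.mk (FreeAbelianGroup.of ((n₁ + n₂ : N), m)
      - FreeAbelianGroup.of (n₁, m) - FreeAbelianGroup.of (n₂, m)) : Tensor A N M) = 0 :=
    (QuotientAddGroup.eq_zero_iff _).mpr
      (AddSubgroup.subset_closure (Or.inl (Or.inl ⟨n₁, n₂, m, rfl⟩)))
  rw [QuotientAddGroup.mk_sub, QuotientAddGroup.mk_sub, sub_sub, sub_eq_zero] at h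
  exact h

theorem tensor_mk_add_right (n : N) (m₁ m₂ : M) :
    Tensor.mk A N M n (m₁ + m₂) = Tensor.mk A N M n m₁ + Tensor.mk A N M n m₂ := by
  have h : (QuotientAddGroup.mk (FreeAbelianGroup.of (n, m₁ + m₂)
      - FreeAbelianGroup.of (n, m₁) - FreeAbelianGroup.of (n, m₂)) : Tensor A N M) = 0 :=
    (QuotientAddGroup.eq_zero_iff _).mpr
      (AddSubgroup.subset_closure (Or.inl (Or.inr ⟨n, m₁, m₂, rfl⟩)))
  rw [QuotientAddGroup.mk_sub, QuotientAddGroup.mk_sub, sub_sub, sub_eq_zero] at h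
  exact h

theorem tensor_mk_balance (a : A) (n : N) (m : M) :
    Tensor.mk A N M (op a • n) m = Tensor.mk A N M n (a • m) := by
  have h : (QuotientAddGroup.mk (FreeAbelianGroup.of (op a • n, m)
      - FreeAbelianGroup.of (n, a • m)) : Tensor A N M) = 0 :=
    (QuotientAddGroup.eq_zero_iff _).mpr
      (AddSubgroup.subset_closure (Or.inr ⟨n, a, m, rfl⟩))
  rw [QuotientAddGroup.mk_sub, sub_eq_zero] at h
  exact h

/-- `m ↦ n ⊗ m` as an additive hom. -/
def tensorMkRight (n : N) : M →+ Tensor A N M :=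
  AddMonoidHom.mk' (fun m => Tensor.mk A N M n m) (tensor_mk_add_right n)

@[simp] lemma tensorMkRight_apply (n : N) (m : M) :
    tensorMkRight n m = Tensor.mk A N M n m := rfl

theorem tensor_mk_zero_right (n : N) : Tensor.mk A N M n 0 = 0 :=
  map_zero (tensorMkRight n)

/-- Building a hom out of the tensor product from a balanced biadditive map. -/
noncomputable def tensorLift {T : Type*} [AddCommGroup T] (b : N → M → T)
    (h1 : ∀ n₁ n₂ m, b (n₁ + n₂) m = b n₁ m + b n₂ m)
    (h2 : ∀ n m₁ m₂, b n (m₁ + m₂) = b n m₁ + b n m₂)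
    (h3 : ∀ (a : A) n m, b (op a • n) m = b n (a • m)) :
    Tensor A N M →+ T :=
  QuotientAddGroup.lift _ (FreeAbelianGroup.lift fun p => b p.1 p.2) (by
    intro x hx
    refine (AddSubgroup.closure_le _).mpr ?_ hx
    rintro z ((⟨n₁, n₂, m, rfl⟩ | ⟨n, m₁, m₂, rfl⟩) | ⟨n, a, m, rfl⟩) <;>
      simp only [SetLike.mem_coe, AddMonoidHom.mem_ker, map_sub, FreeAbelianGroup.lift_apply_of]
    · rw [h1]; abel
    · rw [h2]; abel
    · rw [h3]; abel)

@[simp] lemma tensorLift_mk {T : Type*} [AddCommGroup T] (b : N → M → T)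
    (h1 : ∀ n₁ n₂ m, b (n₁ + n₂) m = b n₁ m + b n₂ m)
    (h2 : ∀ n m₁ m₂, b n (m₁ + m₂) = b n m₁ + b n m₂)
    (h3 : ∀ (a : A) n m, b (op a • n) m = b n (a • m)) (n : N) (m : M) :
    tensorLift b h1 h2 h3 (Tensor.mk A N M n m) = b n m := by
  show QuotientAddGroup.lift _ _ _ (QuotientAddGroup.mk _) = _
  rw [QuotientAddGroup.lift_mk, FreeAbelianGroup.lift_apply_of]

theorem tensor_hom_ext {T : Type*} [AddCommGroup T] {φ ψ : Tensor A N M →+ T}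
    (h : ∀ n m, φ (Tensor.mk A N M n m) = ψ (Tensor.mk A N M n m)) : ∀ z, φ z = ψ z := by
  refine tensor_ind (P := fun z => φ z = ψ z) (by simp) h (fun z hz => ?_)
    (fun z w hz hw => ?_)
  · rw [map_neg, map_neg, hz]
  · rw [map_add, map_add, hz, hw]

end TensorAux

section MapAux

variable {A : Type u} [NonUnitalRing A]
variable {N : Type w} [AddCommGroup N] [PreMod Aᵐᵒᵖ N]
variable {N' : Type w₂} [AddCommGroup N'] [PreMod Aᵐᵒᵖ N']
variable {M : Type u} [AddCommGroup M] [PreMod A M]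
variable {M' : Type u} [AddCommGroup M'] [PreMod A M']

theorem tensor_map_surjective (f : N →+ N') (g : M →+ M')
    (hf : ∀ (a : A) (n : N), f (op a • n) = op a • f n)
    (hg : ∀ (a : A) (m : M), g (a • m) = a • g m)
    (hfs : Function.Surjective f) (hgs : Function.Surjective g) :
    Function.Surjective (Tensor.map f g hf hg) := by
  have : ∀ z, z ∈ (Tensor.map f g hf hg).range := by
    refine tensor_ind (zero_mem _) ?_ (fun z hz => neg_mem hz) (fun z w hz hw => add_mem hz hw)
    intro n m
    obtain ⟨n', rfl⟩ := hfs n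
    obtain ⟨m', rfl⟩ := hgs m
    exact ⟨Tensor.mk A N M n' m', Tensor.map_mk f g hf hg n' m'⟩
  exact fun z => this z

/-- Horizontal and vertical maps commute. -/
theorem tensor_map_comm (f : N →+ N') (g : M →+ M')
    (hf : ∀ (a : A) (n : N), f (op a • n) = op a • f n)
    (hg : ∀ (a : A) (m : M), g (a • m) = a • g m) (z : Tensor A N M) :
    Tensor.map f (AddMonoidHom.id M') hf (fun _ _ => rfl)
        (Tensor.map (AddMonoidHom.id N) g (fun _ _ => rfl) hg z)
      = Tensor.map (AddMonoidHom.id N') g (fun _ _ => rfl) hg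
        (Tensor.map f (AddMonoidHom.id M) hf (fun _ _ => rfl) z) := by
  refine tensor_hom_ext (φ := ((Tensor.map f (AddMonoidHom.id M') hf (fun _ _ => rfl)).comp
      (Tensor.map (AddMonoidHom.id N) g (fun _ _ => rfl) hg)))
    (ψ := ((Tensor.map (AddMonoidHom.id N') g (fun _ _ => rfl) hg).comp
      (Tensor.map f (AddMonoidHom.id M) hf (fun _ _ => rfl)))) ?_ z
  intro n m
  simp only [AddMonoidHom.comp_apply, Tensor.map_mk]
  rfl

end MapAux
section FinFreeAux

variable {A : Type u} [NonUnitalRing A] {I : Type v} {e : I → A} [EnoughIdems A e]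
variable {k : ℕ} {ι : Fin k → I}
variable {N : Type w} [AddCommGroup N] [PreMod Aᵐᵒᵖ N]

/-- Evaluation map `N ⊗ (⊕ⱼ A·e_{ιⱼ}) → N^k`, `n ⊗ p ↦ (n·pⱼ)ⱼ`. -/
noncomputable def evT (ι : Fin k → I) (N : Type w) [AddCommGroup N] [PreMod Aᵐᵒᵖ N] :
    Tensor A N (FinFree A fun j => e (ι j)) →+ (Fin k → N) :=
  tensorLift (fun n p => fun j => op ((p j : A)) • n)
    (fun n₁ n₂ p => funext fun j => PreMod.smul_add' _ n₁ n₂)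
    (fun n p p' => funext fun j => by
      show op (((p j : A) + (p' j : A))) • n = _
      rw [op_add, PreMod.add_smul']
      rfl)
    (fun a n p => funext fun j => by
      show op ((p j : A)) • (op a • n) = op ((a * (p j : A))) • n
      rw [← PreMod.mul_smul', ← op_mul])

@[simp] lemma evT_mk (n : N) (p : FinFree A fun j => e (ι j)) :
    evT ι N (Tensor.mk A N _ n p) = fun j => op ((p j : A)) • n := by
  rw [evT, tensorLift_mk]

/-- The `j`-th standard basis vector of the finite free module. -/
noncomputable def delT (ι : Fin k → I) (j : Fin k) : FinFree A fun j' => e (ι j') :=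
  Pi.single j ⟨e (ι j), EnoughIdems.idem (e := e) (ι j)⟩

theorem sum_smul_delT (p : FinFree A fun j => e (ι j)) :
    ∑ j, ((p j : A) • delT (e := e) ι j) = p := by
  funext j'
  rw [Finset.sum_apply]
  rw [Finset.sum_eq_single j']
  · show (p j' : A) • (delT (e := e) ι j' j') = p j'
    rw [delT, Pi.single_eq_same]
    exact Subtype.ext ((p j').2 : (p j' : A) * e (ι j') = (p j' : A))
  · intro j _ hj
    show (p j : A) • (delT (e := e) ι j j') = 0
    rw [delT, Pi.single_eq_of_ne (Ne.symm hj), PreMod.psmul_zero]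
  · intro h
    exact absurd (Finset.mem_univ j') h

/-- The inverse map `N^k → N ⊗ (⊕ⱼ A·e_{ιⱼ})`, `f ↦ ∑ⱼ fⱼ ⊗ δⱼ`. -/
noncomputable def backT (ι : Fin k → I) (N : Type w) [AddCommGroup N] [PreMod Aᵐᵒᵖ N] :
    (Fin k → N) →+ Tensor A N (FinFree A fun j => e (ι j)) :=
  AddMonoidHom.mk' (fun f => ∑ j, Tensor.mk A N _ (f j) (delT (e := e) ι j))
    (fun f f' => by
      rw [← Finset.sum_add_distrib]
      exact Finset.sum_congr rfl fun j _ => tensor_mk_add_left (f j) (f' j) _)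

lemma backT_apply (f : Fin k → N) :
    backT (e := e) ι N f = ∑ j, Tensor.mk A N _ (f j) (delT (e := e) ι j) := rfl

theorem backT_evT (z : Tensor A N (FinFree A fun j => e (ι j))) :
    backT (e := e) ι N (evT ι N z) = z := by
  refine tensor_ind (P := fun t => backT (e := e) ι N (evT ι N t) = t)
    ?_ ?_ (fun z hz => ?_) (fun z w hz hw => ?_) z
  · rw [map_zero, map_zero]
  · intro n p
    rw [evT_mk, backT_apply]
    calc ∑ j, Tensor.mk A N _ (op ((p j : A)) • n) (delT (e := e) ι j)
        = ∑ j, Tensor.mk A N _ n ((p j : A) • delT (e := e) ι j) := by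
          exact Finset.sum_congr rfl fun j _ => tensor_mk_balance _ n _
      _ = Tensor.mk A N _ n (∑ j, (p j : A) • delT (e := e) ι j) :=
          (map_sum (tensorMkRight (A := A) (N := N) (M := FinFree A fun j => e (ι j)) n)
            _ _).symm
      _ = Tensor.mk A N _ n p := by rw [sum_smul_delT]
  · rw [map_neg, map_neg, hz]
  · rw [map_add, map_add, hz, hw]

theorem evT_fix (z : Tensor A N (FinFree A fun j => e (ι j))) (j : Fin k) :
    op (e (ι j)) • evT ι N z j = evT ι N z j := by
  refine tensor_ind (P := fun t => op (e (ι j)) • evT ι N t j = evT ι N t j)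
    ?_ ?_ (fun z hz => ?_) (fun z w hz hw => ?_) z
  · rw [map_zero]
    show op (e (ι j)) • (0 : N) = 0
    exact PreMod.psmul_zero _
  · intro n p
    rw [evT_mk]
    show op (e (ι j)) • (op ((p j : A)) • n) = op ((p j : A)) • n
    rw [← PreMod.mul_smul', ← op_mul, ((p j).2 : (p j : A) * e (ι j) = (p j : A))]
  · rw [map_neg]
    show op (e (ι j)) • (-(evT ι N z) j) = -(evT ι N z) j
    show op (e (ι j)) • (-(evT ι N z j)) = -(evT ι N z j)
    rw [PreMod.psmul_neg, hz]
  · rw [map_add]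
    show op (e (ι j)) • ((evT ι N z) j + (evT ι N w) j) = (evT ι N z) j + (evT ι N w) j
    rw [PreMod.smul_add', hz, hw]

end FinFreeAux
section PhiAux

variable {A : Type u} [NonUnitalRing A] {I : Type v} {e : I → A} [EnoughIdems A e]
variable {S : Type w} {N : S → Type u} [∀ α, AddCommGroup (N α)] [∀ α, PreMod Aᵐᵒᵖ (N α)]

/-- The `α`-th projection out of the unital product, as an additive hom. -/
noncomputable def projR (e : I → A) [EnoughIdems A e] (N : S → Type u) [∀ α, AddCommGroup (N α)]
    [∀ α, PreMod Aᵐᵒᵖ (N α)] (α : S) :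
    ↥(RA Aᵐᵒᵖ (fun i => op (e i)) (∀ β, N β)) →+ N α :=
  AddMonoidHom.mk' (fun x : ↥(RA Aᵐᵒᵖ (fun i => op (e i)) (∀ β, N β)) => (x : ∀ β, N β) α)
    (fun x y => rfl)

/-- The comparison map `R_A(∏ N) ⊗ M → N α ⊗ M` for an arbitrary left premodule `M`. -/
noncomputable def PhiT (e : I → A) [EnoughIdems A e] (N : S → Type u) [∀ α, AddCommGroup (N α)]
    [∀ α, PreMod Aᵐᵒᵖ (N α)] (M : Type u) [AddCommGroup M] [PreMod A M] (α : S) :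
    Tensor A (↥(RA Aᵐᵒᵖ (fun i => op (e i)) (∀ β, N β))) M →+ Tensor A (N α) M :=
  Tensor.map (projR e N α) (AddMonoidHom.id M) (fun _ _ => rfl) (fun _ _ => rfl)

variable {k : ℕ} {ι : Fin k → I}

theorem evT_PhiT (α : S) (z : Tensor A (↥(RA Aᵐᵒᵖ (fun i => op (e i)) (∀ β, N β)))
    (FinFree A fun j => e (ι j))) (j : Fin k) :
    evT ι (N α) (PhiT e N (FinFree A fun j => e (ι j)) α z) j
      = projR e N α (evT ι _ z j) := by
  refine tensor_ind (P := fun t => ∀ j, evT ι (N α)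
      (PhiT e N (FinFree A fun j => e (ι j)) α t) j = projR e N α (evT ι _ t j))
    ?_ ?_ (fun z hz => ?_) (fun z w hz hw => ?_) z j
  · intro j
    rw [map_zero, map_zero]
    simp
  · intro n p j
    rw [show PhiT e N (FinFree A fun j => e (ι j)) α (Tensor.mk _ _ _ n p)
        = Tensor.mk _ _ _ (projR e N α n) p from Tensor.map_mk _ _ _ _ _ _, evT_mk, evT_mk]
    rfl
  · intro j
    simp only [map_neg, Pi.neg_apply, hz j]
  · intro j
    simp only [map_add, Pi.add_apply, hz j, hw j]

theorem PhiT_ff_inj (z₁ z₂ : Tensor A (↥(RA Aᵐᵒᵖ (fun i => op (e i)) (∀ β, N β)))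
      (FinFree A fun j => e (ι j)))
    (h : ∀ α, PhiT e N (FinFree A fun j => e (ι j)) α z₁
      = PhiT e N (FinFree A fun j => e (ι j)) α z₂) : z₁ = z₂ := by
  have hev : evT ι _ z₁ = evT ι _ z₂ := by
    funext j
    refine Subtype.ext (funext fun α => ?_)
    have h1 := evT_PhiT (ι := ι) α z₁ j
    have h2 := evT_PhiT (ι := ι) α z₂ j
    rw [h α] at h1
    exact h1.symm.trans h2
  rw [← backT_evT (e := e) (ι := ι) z₁, hev, backT_evT]

theorem PhiT_ff_surj (w : ∀ α, Tensor A (N α) (FinFree A fun j => e (ι j))) :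
    ∃ z, ∀ α, PhiT e N (FinFree A fun j => e (ι j)) α z = w α := by
  have hfix : ∀ (α : S) (j : Fin k), op (e (ι j)) • evT ι (N α) (w α) j
      = evT ι (N α) (w α) j := fun α j => evT_fix (w α) j
  set gg : Fin k → (∀ β, N β) := fun j α => evT ι (N α) (w α) j with hgg
  have hmem : ∀ j, gg j ∈ RA Aᵐᵒᵖ (fun i => op (e i)) (∀ β, N β) := by
    intro j
    refine AddSubgroup.subset_closure ⟨ι j, gg j, ?_⟩
    funext α
    exact (hfix α j).symm
  refine ⟨backT (e := e) ι _ (fun j => ⟨gg j, hmem j⟩), fun α => ?_⟩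
  have hnat : PhiT e N (FinFree A fun j => e (ι j)) α
        (backT (e := e) ι _ (fun j => ⟨gg j, hmem j⟩))
      = backT (e := e) ι (N α) (fun j => projR e N α ⟨gg j, hmem j⟩) := by
    rw [backT_apply, map_sum, backT_apply]
    exact Finset.sum_congr rfl fun j _ => Tensor.map_mk _ _ _ _ _ _
  rw [hnat]
  have h2 : (fun j => projR e N α (⟨gg j, hmem j⟩ :
      ↥(RA Aᵐᵒᵖ (fun i => op (e i)) (∀ β, N β)))) = evT ι (N α) (w α) := rfl
  rw [h2, backT_evT]

end PhiAux

section ExactAux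

variable {A : Type u} [NonUnitalRing A]
variable {N : Type w} [AddCommGroup N] [PreMod Aᵐᵒᵖ N]
variable {P₀ P₁ F : Type u} [AddCommGroup P₀] [PreMod A P₀] [AddCommGroup P₁] [PreMod A P₁]
  [AddCommGroup F] [PreMod A F]

theorem tensor_comp_zero (g : P₀ →+ F) (hg : ∀ (a : A) m, g (a • m) = a • g m)
    (d : P₁ →+ P₀) (hd : ∀ (a : A) m, d (a • m) = a • d m) (hrange : d.range ≤ g.ker)
    (y : Tensor A N P₁) :
    Tensor.map (AddMonoidHom.id N) g (fun _ _ => rfl) hg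
      (Tensor.map (AddMonoidHom.id N) d (fun _ _ => rfl) hd y) = 0 := by
  refine tensor_hom_ext (φ := (Tensor.map (AddMonoidHom.id N) g (fun _ _ => rfl) hg).comp
    (Tensor.map (AddMonoidHom.id N) d (fun _ _ => rfl) hd)) (ψ := 0) ?_ y
  intro n q
  simp only [AddMonoidHom.comp_apply, Tensor.map_mk, AddMonoidHom.zero_apply]
  have hgd : g (d q) = 0 := AddMonoidHom.mem_ker.mp
    (hrange (AddMonoidHom.mem_range.mpr ⟨q, rfl⟩))
  show Tensor.mk A N F n (g (d q)) = 0
  rw [hgd]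
  exact tensor_mk_zero_right n

theorem tensor_exact (g : P₀ →+ F) (hg : ∀ (a : A) m, g (a • m) = a • g m)
    (hgs : Function.Surjective g)
    (d : P₁ →+ P₀) (hd : ∀ (a : A) m, d (a • m) = a • d m)
    (hker : g.ker ≤ d.range)
    (x : Tensor A N P₀)
    (hx : Tensor.map (AddMonoidHom.id N) g (fun _ _ => rfl) hg x = 0) :
    x ∈ (Tensor.map (AddMonoidHom.id N) d (fun _ _ => rfl) hd).range := by
  set Rng := (Tensor.map (AddMonoidHom.id N) d (fun _ _ => rfl) hd).range with hRng
  have key : ∀ (n : N) (p p' : P₀), g p = g p' →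
      (QuotientAddGroup.mk (Tensor.mk A N P₀ n p) : Tensor A N P₀ ⧸ Rng)
        = QuotientAddGroup.mk (Tensor.mk A N P₀ n p') := by
    intro n p p' h
    rw [QuotientAddGroup.eq]
    obtain ⟨q, hq⟩ := hker (show p' - p ∈ g.ker by
      rw [AddMonoidHom.mem_ker, map_sub, h, sub_self])
    have h2 : Tensor.map (AddMonoidHom.id N) d (fun _ _ => rfl) hd (Tensor.mk A N P₁ n q)
        = -Tensor.mk A N P₀ n p + Tensor.mk A N P₀ n p' := by
      rw [Tensor.map_mk]
      show Tensor.mk A N P₀ n (d q) = _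
      rw [hq, neg_add_eq_sub,
        show Tensor.mk A N P₀ n (p' - p) = tensorMkRight n (p' - p) from rfl,
        map_sub]
      rfl
    exact AddMonoidHom.mem_range.mpr ⟨Tensor.mk A N P₁ n q, h2⟩
  have hsec : ∀ f, g (Function.surjInv hgs f) = f := Function.surjInv_eq hgs
  set h : Tensor A N F →+ Tensor A N P₀ ⧸ Rng :=
    tensorLift (fun n f => QuotientAddGroup.mk (Tensor.mk A N P₀ n (Function.surjInv hgs f)))
      (fun n₁ n₂ f => by
        rw [tensor_mk_add_left, QuotientAddGroup.mk_add])
      (fun n f₁ f₂ => by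
        rw [← QuotientAddGroup.mk_add, ← tensor_mk_add_right]
        exact key n _ _ (by rw [hsec, map_add, hsec, hsec]))
      (fun a n f => by
        rw [tensor_mk_balance]
        exact key n _ _ (by rw [hg, hsec, hsec])) with hdef
  have hcomp : ∀ y : Tensor A N P₀,
      h (Tensor.map (AddMonoidHom.id N) g (fun _ _ => rfl) hg y)
        = QuotientAddGroup.mk y := by
    intro y
    refine tensor_hom_ext
      (φ := h.comp (Tensor.map (AddMonoidHom.id N) g (fun _ _ => rfl) hg))
      (ψ := QuotientAddGroup.mk' Rng) ?_ y
    intro n p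
    simp only [AddMonoidHom.comp_apply, Tensor.map_mk, hdef, tensorLift_mk]
    show (QuotientAddGroup.mk (Tensor.mk A N P₀ n (Function.surjInv hgs (g p)))
        : Tensor A N P₀ ⧸ Rng) = QuotientAddGroup.mk (Tensor.mk A N P₀ n p)
    exact key n _ p (hsec (g p))
  have hfin := hcomp x
  rw [hx, map_zero] at hfin
  exact (QuotientAddGroup.eq_zero_iff x).mp hfin.symm

end ExactAux
/-- For a ring `A` with enough idempotents, a family `{N_α}` of unital right
`A`-modules and a finitely presented unital left `A`-module `F`, the natural map
`R_A(∏_α N_α) ⊗_A F → ∏_α (N_α ⊗_A F)` is an isomorphism, where `R_A(∏_α N_α)` is the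
product in the category of unital right `A`-modules. -/
theorem unital_product_tensor_finitely_presented_bijective
    (A : Type u) [NonUnitalRing A] {I : Type v} (e : I → A) [EnoughIdems A e]
    (S : Type w) (N : S → Type u) [∀ α, AddCommGroup (N α)] [∀ α, PreMod Aᵐᵒᵖ (N α)]
    (hN : ∀ α, IsUnital Aᵐᵒᵖ (fun i => op (e i)) (N α))
    (F : Type u) [AddCommGroup F] [PreMod A F] (hF : IsFPn A e 1 F) :
    Function.Bijective
      (fun z : Tensor A (↥(RA Aᵐᵒᵖ (fun i => op (e i)) (∀ β, N β))) F =>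
        fun α : S => projTensor A e S N F α z) := by
  classical
  obtain ⟨k, ι, d, g, hgs, hex1, -⟩ := hF
  have hex := hex1 one_pos
  let gh : (FinFree A fun j => e (ι 0 j)) →+ F := (g : _ →+ F)
  have hgl : ∀ (a : A) m, gh (a • m) = a • gh m := g.2
  let dh : (FinFree A fun j => e (ι 1 j)) →+ (FinFree A fun j => e (ι 0 j)) :=
    (d 0 : _ →+ _)
  have hdl : ∀ (a : A) m, dh (a • m) = a • dh m := (d 0).2
  have hgs' : Function.Surjective gh := hgs
  have hPT : ∀ (α : S) z, projTensor A e S N F α z = PhiT e N F α z := fun _ _ => rfl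
  have hz : ∀ z, (∀ α, PhiT e N F α z = 0) → z = 0 := by
    intro z hz0
    obtain ⟨z', rfl⟩ := tensor_map_surjective (AddMonoidHom.id _) gh
      (fun _ _ => rfl) hgl Function.surjective_id hgs' z
    have h1 : ∀ α, Tensor.map (AddMonoidHom.id (N α)) gh (fun _ _ => rfl) hgl
        (PhiT e N _ α z') = 0 := by
      intro α
      rw [show PhiT e N _ α z' = Tensor.map (projR e N α) (AddMonoidHom.id _)
        (fun _ _ => rfl) (fun _ _ => rfl) z' from rfl,
        ← tensor_map_comm (projR e N α) gh (fun _ _ => rfl) hgl z']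
      exact hz0 α
    have h2 : ∀ α, ∃ y, Tensor.map (AddMonoidHom.id (N α)) dh (fun _ _ => rfl) hdl y
        = PhiT e N _ α z' := fun α => AddMonoidHom.mem_range.mp
      (tensor_exact gh hgl hgs' dh hdl (le_of_eq hex.symm) _ (h1 α))
    choose y hy using h2
    obtain ⟨z'', hz''⟩ := PhiT_ff_surj (e := e) (ι := ι 1) y
    have h3 : Tensor.map (AddMonoidHom.id _) dh (fun _ _ => rfl) hdl z'' = z' := by
      apply PhiT_ff_inj (e := e) (ι := ι 0)
      intro α
      rw [show PhiT e N _ α (Tensor.map (AddMonoidHom.id _) dh (fun _ _ => rfl) hdl z'')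
        = Tensor.map (projR e N α) (AddMonoidHom.id _) (fun _ _ => rfl) (fun _ _ => rfl)
          (Tensor.map (AddMonoidHom.id _) dh (fun _ _ => rfl) hdl z'') from rfl,
        tensor_map_comm (projR e N α) dh (fun _ _ => rfl) hdl z'']
      show Tensor.map (AddMonoidHom.id (N α)) dh (fun _ _ => rfl) hdl
        (PhiT e N _ α z'') = _
      rw [hz'' α, hy α]
    rw [← h3]
    exact tensor_comp_zero gh hgl dh hdl (le_of_eq hex) z''
  constructor
  · intro z₁ z₂ h12
    have h12' : ∀ α, projTensor A e S N F α z₁ = projTensor A e S N F α z₂ :=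
      fun α => congrFun h12 α
    have hsub : ∀ α, PhiT e N F α (z₁ - z₂) = 0 := by
      intro α
      rw [map_sub,
        show PhiT e N F α z₁ = projTensor A e S N F α z₁ from rfl,
        show PhiT e N F α z₂ = projTensor A e S N F α z₂ from rfl,
        h12' α, sub_self]
    exact sub_eq_zero.mp (hz (z₁ - z₂) hsub)
  · intro w
    have hpre : ∀ α, ∃ wp, Tensor.map (AddMonoidHom.id (N α)) gh (fun _ _ => rfl) hgl wp
        = w α := fun α => tensor_map_surjective (AddMonoidHom.id (N α)) gh (fun _ _ => rfl)
      hgl Function.surjective_id hgs' (w α)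
    choose w' hw' using hpre
    obtain ⟨z', hz'⟩ := PhiT_ff_surj (e := e) (ι := ι 0) w'
    refine ⟨Tensor.map (AddMonoidHom.id _) gh (fun _ _ => rfl) hgl z', funext fun α => ?_⟩
    show projTensor A e S N F α (Tensor.map (AddMonoidHom.id _) gh (fun _ _ => rfl) hgl z')
      = w α
    rw [hPT,
      show PhiT e N F α (Tensor.map (AddMonoidHom.id _) gh (fun _ _ => rfl) hgl z')
        = Tensor.map (projR e N α) (AddMonoidHom.id F) (fun _ _ => rfl) (fun _ _ => rfl)
          (Tensor.map (AddMonoidHom.id _) gh (fun _ _ => rfl) hgl z') from rfl,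
      tensor_map_comm (projR e N α) gh (fun _ _ => rfl) hgl z']
    show Tensor.map (AddMonoidHom.id (N α)) gh (fun _ _ => rfl) hgl (PhiT e N _ α z') = w α
    rw [hz' α, hw' α]
end

section
/- The category Ch(R) of chain complexes of left R-modules over a nonzero ring R with identity is never n-hereditary for any n ≥ 0: the sphere complex S⁰(R) (R concentrated in degree 0) is of type FP_n in Ch(R) for every n but has infinite projective dimension in Ch(R). -/
open CategoryTheory Limits

universe u

/-- A left `R`-module is of type `FPₙ` (finitely `n`-presented): it admits an exact sequence
`Pₙ → ⋯ → P₁ → P₀ → M → 0` with each `Pₖ` finitely generated free. -/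
def ModIsFPn (R : Type u) [Ring R] (n : ℕ) (M : Type u) [AddCommGroup M] [Module R M] :
    Prop :=
  ∃ (k : ℕ → ℕ) (d : ∀ s : ℕ, (Fin (k (s + 1)) → R) →ₗ[R] (Fin (k s) → R))
    (g : (Fin (k 0) → R) →ₗ[R] M),
    Function.Surjective g ∧
    (0 < n → LinearMap.range (d 0) = LinearMap.ker g) ∧
    (∀ s : ℕ, s + 1 < n → LinearMap.range (d (s + 1)) = LinearMap.ker (d s))

/-- A left `R`-module has projective dimension at most `1`: the kernel of a free cover is
projective. -/
def ModPdLeOne (R : Type u) [Ring R] (M : Type u) [AddCommGroup M] [Module R M] : Prop :=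
  ∃ (ι : Type u) (g : (ι →₀ R) →ₗ[R] M), Function.Surjective g ∧
    Module.Projective R (LinearMap.ker g)

/-- The category of (ℤ-indexed) chain complexes of left `R`-modules. -/
abbrev ChainCpx (R : Type u) [Ring R] :=
  HomologicalComplex (ModuleCat.{u} R) (ComplexShape.down ℤ)

/-- A chain complex is of type `FPₙ` in `Ch(R)` iff it is bounded and all of its entries are
left `R`-modules of type `FPₙ` (finitely `n`-presented). -/
def ChIsFPn (R : Type u) [Ring R] (n : ℕ) (X : ChainCpx R) : Prop :=
  (∃ a b : ℤ, ∀ i : ℤ, (i < a ∨ b < i) → IsZero (X.X i)) ∧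
  ∀ i : ℤ, ModIsFPn R n (X.X i)

/-- Projective dimension at most `m` of an object of an abelian category, via iterated
syzygies by projective covers. -/
def CatPdLe {C : Type*} [Category C] [Abelian C] : ℕ → C → Prop
  | 0, X => Projective X
  | (m + 1), X => ∃ (K P : C) (i : K ⟶ P) (p : P ⟶ X) (w : i ≫ p = 0),
      Projective P ∧ (ShortComplex.mk i p w).ShortExact ∧ CatPdLe m K

/-- The sphere complex `S⁰(R)`: `R` concentrated in degree `0`. -/
noncomputable def sphereCpx (R : Type u) [Ring R] : ChainCpx R :=
  (HomologicalComplex.single (ModuleCat.{u} R) (ComplexShape.down ℤ) 0).obj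
    (ModuleCat.of R R)

section Aux

variable {R : Type u} [Ring R]

/-- The contractible "disk" cover of a chain complex. -/
noncomputable def diskCpx (P : ChainCpx R) : ChainCpx R where
  X i := ModuleCat.of R (↑(P.X i) × ↑(P.X (i + 1)))
  d i j :=
    if h : j + 1 = i then
      ModuleCat.ofHom ((LinearMap.inr R ↑(P.X j) ↑(P.X (j + 1))).comp
        ((eqToHom (show P.X i = P.X (j + 1) by rw [h]) : P.X i ⟶ P.X (j + 1)).hom.comp
          (LinearMap.fst R ↑(P.X i) ↑(P.X (i + 1)))))
    else 0
  shape i j h := dif_neg (by simpa using h)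
  d_comp_d' i j k hij hjk := by
    simp only [ComplexShape.down_Rel] at hij hjk
    subst hij; subst hjk
    apply ModuleCat.hom_ext
    apply LinearMap.ext
    rintro ⟨a, b⟩
    simp only [dif_pos rfl]
    rfl

@[simp] lemma diskCpx_d (P : ChainCpx R) (k : ℤ) :
    (diskCpx P).d (k + 1) k =
      ModuleCat.ofHom ((LinearMap.inr R ↑(P.X k) ↑(P.X (k + 1))).comp
        (LinearMap.fst R ↑(P.X (k + 1)) ↑(P.X (k + 1 + 1)))) := by
  show dite _ _ _ = _
  refine (dif_pos rfl).trans ?_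
  simp only [eqToHom_refl]
  rfl

/-- The canonical epimorphism from the disk cover. -/
noncomputable def diskπ (P : ChainCpx R) : diskCpx P ⟶ P where
  f i := ModuleCat.ofHom (LinearMap.coprod LinearMap.id (P.d (i + 1) i).hom)
  comm' i j hij := by
    simp only [ComplexShape.down_Rel] at hij
    subst hij
    apply ModuleCat.hom_ext
    apply LinearMap.ext
    rintro ⟨a, b⟩
    have h2 : P.d (j + 1 + 1) (j + 1) ≫ P.d (j + 1) j = 0 := P.d_comp_d _ _ _
    have h2' := congrArg (fun f => ModuleCat.Hom.hom f b) h2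
    simp only [diskCpx_d]
    show (P.d (j + 1) j).hom (a + (P.d (j + 1 + 1) (j + 1)).hom b) =
      LinearMap.coprod LinearMap.id (P.d (j + 1) j).hom (0, a)
    simp only [map_add, LinearMap.coprod_apply, LinearMap.id_apply, map_zero, zero_add]
    rw [show (P.d (j + 1) j).hom ((P.d (j + 1 + 1) (j + 1)).hom b) = 0 from h2']
    simp

lemma diskCpx_exactAt (P : ChainCpx R) (j : ℤ) : (diskCpx P).ExactAt j := by
  obtain ⟨k, rfl⟩ : ∃ k, j = k + 1 := ⟨j - 1, by omega⟩
  rw [HomologicalComplex.exactAt_iff' _ (k + 1 + 1) (k + 1) k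
    ((ComplexShape.down ℤ).prev_eq' (by simp)) ((ComplexShape.down ℤ).next_eq' (by simp))]
  rw [ShortComplex.moduleCat_exact_iff]
  rintro (⟨a, b⟩ : ↑(P.X (k + 1)) × ↑(P.X (k + 1 + 1))) hx
  have ha : a = 0 := by
    have := congrArg Prod.snd hx
    have hg : ((diskCpx P).sc' (k + 1 + 1) (k + 1) k).g = (diskCpx P).d (k + 1) k := rfl
    rw [hg, diskCpx_d] at this
    exact this
  refine ⟨((b, 0) : ↑(P.X (k + 1 + 1)) × ↑(P.X (k + 1 + 1 + 1))), ?_⟩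
  have hf : ((diskCpx P).sc' (k + 1 + 1) (k + 1) k).f = (diskCpx P).d (k + 1 + 1) (k + 1) := rfl
  rw [hf, diskCpx_d]
  subst ha
  rfl

instance diskπ_epi (P : ChainCpx R) : Epi (diskπ P) := by
  apply HomologicalComplex.epi_of_epi_f
  intro i
  rw [ModuleCat.epi_iff_surjective]
  intro x
  refine ⟨((x, 0) : ↑(P.X i) × ↑(P.X (i + 1))), ?_⟩
  show LinearMap.coprod LinearMap.id (P.d (i + 1) i).hom (x, 0) = x
  erw [LinearMap.coprod_apply]
  simp

lemma homology_isZero_of_projective (P : ChainCpx R) (hP : Projective P) (i : ℤ) :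
    IsZero (P.homology i) := by
  haveI := hP
  have hQ : IsZero ((diskCpx P).homology i) := by
    rw [← HomologicalComplex.exactAt_iff_isZero_homology]
    exact diskCpx_exactAt P i
  rw [IsZero.iff_id_eq_zero]
  have hfac : Projective.factorThru (𝟙 P) (diskπ P) ≫ diskπ P = 𝟙 P :=
    Projective.factorThru_comp _ _
  calc 𝟙 (P.homology i) = HomologicalComplex.homologyMap (𝟙 P) i := by simp
    _ = HomologicalComplex.homologyMap (Projective.factorThru (𝟙 P) (diskπ P) ≫ diskπ P) i := by
        rw [hfac]
    _ = HomologicalComplex.homologyMap (Projective.factorThru (𝟙 P) (diskπ P)) i ≫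
          HomologicalComplex.homologyMap (diskπ P) i := by
        rw [HomologicalComplex.homologyMap_comp]
    _ = 0 := by
        rw [hQ.eq_of_tgt (HomologicalComplex.homologyMap
          (Projective.factorThru (𝟙 P) (diskπ P)) i) 0, zero_comp]

lemma homology_isZero_of_catPdLe :
    ∀ (m : ℕ) (X : ChainCpx R), CatPdLe m X → ∀ i : ℤ, IsZero (X.homology i) := by
  intro m
  induction m with
  | zero => exact fun X hX i => homology_isZero_of_projective X hX i
  | succ m ih =>
    intro X hX i
    obtain ⟨K, P, f, p, w, hP, hSE, hK⟩ := hX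
    have hrel : (ComplexShape.down ℤ).Rel i (i - 1) := by
      show i - 1 + 1 = i; omega
    have hex := hSE.homology_exact₃ i (i - 1) hrel
    exact hex.isZero_X₂
      ((homology_isZero_of_projective P hP i).eq_of_src _ _)
      ((ih K hK (i - 1)).eq_of_tgt _ _)

lemma subsingleton_of_isZero {M : ModuleCat.{u} R} (h : IsZero M) : Subsingleton M := by
  refine ⟨fun x y => ?_⟩
  have h1 : (𝟙 M : M ⟶ M) = 0 := h.eq_of_src _ _
  have hx : x = 0 := congrArg (fun f => ModuleCat.Hom.hom f x) h1
  have hy : y = 0 := congrArg (fun f => ModuleCat.Hom.hom f y) h1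
  rw [hx, hy]

lemma submodule_eq {M : Type u} [AddCommGroup M] [Module R M] [Subsingleton M]
    (p q : Submodule R M) : p = q := by
  ext x
  rw [Subsingleton.elim x 0]
  simp

lemma modIsFPn_of_subsingleton (n : ℕ) (M : Type u) [AddCommGroup M] [Module R M]
    [Subsingleton M] : ModIsFPn R n M := by
  haveI : Subsingleton (Fin (0 : ℕ) → R) := ⟨fun a b => funext fun i => i.elim0⟩
  exact ⟨fun _ => 0, fun _ => 0, 0,
    fun y => ⟨0, Subsingleton.elim _ _⟩,
    fun _ => submodule_eq _ _,
    fun s _ => submodule_eq _ _⟩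

lemma modIsFPn_of_equiv (n : ℕ) {M : Type u} [AddCommGroup M] [Module R M]
    (e : R ≃ₗ[R] M) : ModIsFPn R n M := by
  haveI : Subsingleton (Fin (0 : ℕ) → R) := ⟨fun a b => funext fun i => i.elim0⟩
  refine ⟨fun s => match s with | 0 => 1 | _ + 1 => 0, fun _ => 0,
    e.toLinearMap.comp (LinearMap.proj (0 : Fin 1)), ?_, ?_, fun s _ => submodule_eq _ _⟩
  · intro m
    exact ⟨fun _ => e.symm m, by simp⟩
  · intro _
    rw [LinearMap.range_zero]
    symm
    rw [LinearMap.ker_eq_bot]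
    intro v w hvw
    simp only [LinearMap.coe_comp, Function.comp_apply, LinearMap.proj_apply] at hvw
    have h0 : v 0 = w 0 := e.injective hvw
    funext i
    have : i = 0 := Subsingleton.elim _ _
    rw [this]; exact h0

lemma sphere_homology_ne [Nontrivial R] :
    ¬ IsZero ((sphereCpx R).homology 0) := by
  intro h
  have e := HomologicalComplex.singleObjHomologySelfIso (ComplexShape.down ℤ) 0
    (ModuleCat.of R R)
  have hz : IsZero (ModuleCat.of R R) := h.of_iso e.symm
  haveI : Subsingleton R := subsingleton_of_isZero hz
  exact one_ne_zero (Subsingleton.elim (1 : R) 0)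

end Aux

/-- For a nonzero ring `R`, the category `Ch(R)` is never `n`-hereditary:
the sphere complex `S⁰(R)` is of type `FPₙ` in `Ch(R)` for every `n`, yet it has infinite
projective dimension; in particular, for no `n` does every object of type `FPₙ` in `Ch(R)`
have projective dimension at most `1`. -/
theorem chain_complexes_never_n_hereditary (R : Type u) [Ring R] [Nontrivial R] :
    (∀ n : ℕ, ChIsFPn R n (sphereCpx R)) ∧
    (∀ m : ℕ, ¬ CatPdLe m (sphereCpx R)) ∧
    (∀ n : ℕ, ¬ ∀ X : ChainCpx R, ChIsFPn R n X → CatPdLe 1 X) := by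
  have hFP : ∀ n : ℕ, ChIsFPn R n (sphereCpx R) := by
    intro n
    constructor
    · refine ⟨0, 0, fun i hi => ?_⟩
      exact HomologicalComplex.isZero_single_obj_X (ComplexShape.down ℤ) 0
        (ModuleCat.of R R) i (by omega)
    · intro i
      by_cases hi : i = 0
      · subst hi
        have e : ((sphereCpx R).X 0 : ModuleCat.{u} R) ≅ ModuleCat.of R R :=
          HomologicalComplex.singleObjXSelf (ComplexShape.down ℤ) 0 (ModuleCat.of R R)
        refine modIsFPn_of_equiv n (LinearEquiv.ofLinear e.inv.hom e.hom.hom ?_ ?_)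
        · exact congrArg ModuleCat.Hom.hom e.hom_inv_id
        · exact congrArg ModuleCat.Hom.hom e.inv_hom_id
      · have hz : IsZero ((sphereCpx R).X i) :=
          HomologicalComplex.isZero_single_obj_X (ComplexShape.down ℤ) 0
            (ModuleCat.of R R) i hi
        haveI := subsingleton_of_isZero hz
        exact modIsFPn_of_subsingleton n _
  have hPd : ∀ m : ℕ, ¬ CatPdLe m (sphereCpx R) := by
    intro m hm
    exact sphere_homology_ne (R := R) (homology_isZero_of_catPdLe m _ hm 0)
  exact ⟨hFP, hPd, fun n h => hPd 1 (h _ (hFP n))⟩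
end

section
/- Let A be a small additive category and n ≥ 1. The functor category Add(A, Ab) is n-coherent (every object of type FP_n is of type FP_{n+1}) if and only if every morphism in A that has a pseudo (n−1)-cokernel has a pseudo n-cokernel. -/
open CategoryTheory Limits Opposite

universe u

variable (𝒜 : Type u) [SmallCategory 𝒜] [Preadditive 𝒜] [HasFiniteBiproducts 𝒜]

/-- A morphism `f : Y ⟶ X` of `𝒜` has a pseudo `m`-cokernel: a chain
`X ⟶ W₀ ⟶ W₁ ⟶ ⋯` such that applying `Hom(-, Z)` yields an exact sequence
`Hom(W_{m-1}, Z) → ⋯ → Hom(W₀, Z) → Hom(X, Z) → Hom(Y, Z)` for every `Z`.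
(Every morphism is a pseudo `0`-cokernel of itself.) -/
def HasPseudoCoker (m : ℕ) {Y X : 𝒜} (f : Y ⟶ X) : Prop :=
  m = 0 ∨ ∃ (W : ℕ → 𝒜) (d₀ : X ⟶ W 0) (d : ∀ i : ℕ, W i ⟶ W (i + 1)),
    (∀ (Z : 𝒜) (u : X ⟶ Z), f ≫ u = 0 ↔ ∃ v : W 0 ⟶ Z, u = d₀ ≫ v) ∧
    (2 ≤ m → ∀ (Z : 𝒜) (u : W 0 ⟶ Z), d₀ ≫ u = 0 ↔ ∃ v : W 1 ⟶ Z, u = d 0 ≫ v) ∧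
    (∀ i : ℕ, i + 3 ≤ m → ∀ (Z : 𝒜) (u : W (i + 1) ⟶ Z),
      d i ≫ u = 0 ↔ ∃ v : W (i + 2) ⟶ Z, u = d (i + 1) ≫ v)

/-- An additive functor `F : 𝒜 ⥤ Ab` is of type `FPₙ` if it admits an exact resolution
`Hom(Xₙ, -) → ⋯ → Hom(X₀, -) → F → 0` by representable functors (exactness is tested
pointwise). -/
def FunctorIsFPn (n : ℕ) (F : 𝒜 ⥤ AddCommGrpCat.{u}) : Prop :=
  ∃ (X : ℕ → 𝒜) (g : ∀ s : ℕ, X s ⟶ X (s + 1))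
    (ε : preadditiveCoyoneda.obj (op (X 0)) ⟶ F),
    (∀ Z : 𝒜, Function.Surjective (ε.app Z)) ∧
    (0 < n → ∀ (Z : 𝒜) (u : X 0 ⟶ Z), ε.app Z u = 0 ↔ ∃ v : X 1 ⟶ Z, u = g 0 ≫ v) ∧
    (∀ s : ℕ, s + 1 < n → ∀ (Z : 𝒜) (u : X (s + 1) ⟶ Z),
      g s ≫ u = 0 ↔ ∃ v : X (s + 2) ⟶ Z, u = g (s + 1) ≫ v)

namespace PCAux

variable {𝒜}


/-- prepend one object to a chain -/
def ch1 (X : 𝒜) (W : ℕ → 𝒜) : ℕ → 𝒜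
  | 0 => X
  | j + 1 => W j

def ch1map {X : 𝒜} {W : ℕ → 𝒜} (d₀ : X ⟶ W 0) (d : ∀ i : ℕ, W i ⟶ W (i + 1)) :
    ∀ j, ch1 X W j ⟶ ch1 X W (j + 1)
  | 0 => d₀
  | j + 1 => d j

section Coker

variable {Y X : 𝒜} (f : Y ⟶ X)

def pcSub (Z : 𝒜) : AddSubgroup (Y ⟶ Z) where
  carrier := {u | ∃ v : X ⟶ Z, u = f ≫ v}
  add_mem' := by rintro a b ⟨v, rfl⟩ ⟨w, rfl⟩; exact ⟨v + w, by simp⟩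
  zero_mem' := ⟨0, by simp⟩
  neg_mem' := by rintro a ⟨v, rfl⟩; exact ⟨-v, by simp⟩

noncomputable def cokF : 𝒜 ⥤ AddCommGrpCat.{u} where
  obj Z := AddCommGrpCat.of ((Y ⟶ Z) ⧸ pcSub f Z)
  map {Z Z'} g := AddCommGrpCat.ofHom (QuotientAddGroup.map _ _
      (AddMonoidHom.mk' (fun u => u ≫ g) (fun a b => by simp))
      (by rintro u ⟨v, rfl⟩; exact ⟨v ≫ g, by simp⟩))
  map_id Z := by
    refine AddCommGrpCat.ext fun x => ?_
    refine QuotientAddGroup.induction_on x fun u => ?_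
    simp [QuotientAddGroup.map_mk]
  map_comp {Z Z' Z''} g h := by
    refine AddCommGrpCat.ext fun x => ?_
    refine QuotientAddGroup.induction_on x fun u => ?_
    simp [QuotientAddGroup.map_mk]

lemma cokF_map_mk {Z Z' : 𝒜} (g : Z ⟶ Z') (u : Y ⟶ Z) :
    (cokF f).map g (QuotientAddGroup.mk u) = (QuotientAddGroup.mk (u ≫ g) : (Y ⟶ Z') ⧸ pcSub f Z') :=
  QuotientAddGroup.map_mk _ _ _ (by rintro u ⟨v, rfl⟩; exact ⟨v ≫ g, by simp⟩) u

instance cokF_additive : (cokF f).Additive where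
  map_add := by
    intro Z Z' g h
    refine AddCommGrpCat.ext fun x => ?_
    refine QuotientAddGroup.induction_on x fun u => ?_
    rw [show ((cokF f).map g + (cokF f).map h) ((QuotientAddGroup.mk u : _ ⧸ pcSub f Z)) =
      (cokF f).map g (QuotientAddGroup.mk u) + (cokF f).map h (QuotientAddGroup.mk u) from rfl]
    rw [cokF_map_mk, cokF_map_mk, cokF_map_mk, Preadditive.comp_add]
    rfl

noncomputable def proj : preadditiveCoyoneda.obj (op Y) ⟶ cokF f where
  app Z := AddCommGrpCat.ofHom (QuotientAddGroup.mk' (pcSub f Z))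
  naturality {Z Z'} g := by
    refine AddCommGrpCat.ext fun u => ?_
    rfl

lemma proj_surj : ∀ Z : 𝒜, Function.Surjective ((proj f).app Z) := by
  intro Z x
  obtain ⟨u, hu⟩ := QuotientAddGroup.mk_surjective (x : (Y ⟶ Z) ⧸ pcSub f Z); exact ⟨u, hu⟩

lemma proj_ker (Z : 𝒜) (u : Y ⟶ Z) : (proj f).app Z u = 0 ↔ ∃ v : X ⟶ Z, u = f ≫ v := by
  rw [show ((proj f).app Z u = 0) ↔ _ from QuotientAddGroup.eq_zero_iff u]
  rfl

end Coker

lemma conat {G : 𝒜 ⥤ AddCommGrpCat.{u}} {A₀ : 𝒜} (η : preadditiveCoyoneda.obj (op A₀) ⟶ G)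
    {Z Z' : 𝒜} (g : Z ⟶ Z') (u : A₀ ⟶ Z) : η.app Z' (u ≫ g) = G.map g (η.app Z u) := by
  have h := congrArg (fun (φ : _ ⟶ G.obj Z') => φ u) (η.naturality g)
  exact h

section Main

variable {F : 𝒜 ⥤ AddCommGrpCat.{u}}

lemma lift_of_surj {A₀ B₀ : 𝒜} (ε : preadditiveCoyoneda.obj (op A₀) ⟶ F)
    (ε' : preadditiveCoyoneda.obj (op B₀) ⟶ F)
    (hε's : ∀ Z : 𝒜, Function.Surjective (ε'.app Z)) :
    ∃ q : B₀ ⟶ A₀, ∀ (Z : 𝒜) (u : A₀ ⟶ Z), ε.app Z u = ε'.app Z (q ≫ u) := by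
  obtain ⟨q, hq⟩ := hε's A₀ (ε.app A₀ (𝟙 A₀))
  refine ⟨q, fun Z u => ?_⟩
  rw [conat ε' u q, hq, ← conat ε u (𝟙 A₀), Category.id_comp]

lemma main_comparison (m : ℕ)
    (A : ℕ → 𝒜) (α : ∀ j, A j ⟶ A (j+1)) (B : ℕ → 𝒜) (β : ∀ j, B j ⟶ B (j+1))
    (ε : preadditiveCoyoneda.obj (op (A 0)) ⟶ F) (ε' : preadditiveCoyoneda.obj (op (B 0)) ⟶ F)
    (hεs : ∀ Z : 𝒜, Function.Surjective (ε.app Z))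
    (hεk : ∀ (Z : 𝒜) (u : A 0 ⟶ Z), ε.app Z u = 0 ↔ ∃ v : A 1 ⟶ Z, u = α 0 ≫ v)
    (hε's : ∀ Z : 𝒜, Function.Surjective (ε'.app Z))
    (hε'k : ∀ (Z : 𝒜) (u : B 0 ⟶ Z), ε'.app Z u = 0 ↔ ∃ v : B 1 ⟶ Z, u = β 0 ≫ v)
    (hS : ∀ j, j + 1 ≤ m → ∀ (Z : 𝒜) (u : A (j+1) ⟶ Z),
      α j ≫ u = 0 ↔ ∃ v : A (j+2) ⟶ Z, u = α (j+1) ≫ v)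
    (hB : ∀ j, j ≤ m → ∀ (Z : 𝒜) (u : B (j+1) ⟶ Z),
      β j ≫ u = 0 ↔ ∃ v : B (j+2) ⟶ Z, u = β (j+1) ≫ v) :
    ∃ (V : 𝒜) (t : A (m+1) ⟶ V), ∀ (Z : 𝒜) (u : A (m+1) ⟶ Z),
      α m ≫ u = 0 ↔ ∃ v : V ⟶ Z, u = t ≫ v := by
  obtain ⟨q0, hq0⟩ := lift_of_surj ε ε' hε's
  obtain ⟨p0, hp0⟩ := lift_of_surj ε' ε hεs
  have J : ∀ j, j + 1 ≤ m + 1 →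
      ∃ (q : B j ⟶ A j) (q' : B (j+1) ⟶ A (j+1)) (p : A j ⟶ B j) (p' : A (j+1) ⟶ B (j+1))
        (k : A (j+1) ⟶ A j),
        β j ≫ q' = q ≫ α j ∧ α j ≫ p' = p ≫ β j ∧
        α j ≫ (𝟙 (A (j+1)) - p' ≫ q' - k ≫ α j) = 0 := by
    intro j
    induction j with
    | zero =>
      intro _
      have hεα : ε.app (A 1) (α 0) = 0 := (hεk _ _).2 ⟨𝟙 _, (Category.comp_id _).symm⟩
      have h1 : ε'.app (A 1) (q0 ≫ α 0) = 0 := by rw [← hq0]; exact hεα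
      obtain ⟨q1, hq1⟩ := (hε'k _ _).1 h1
      have hε'β : ε'.app (B 1) (β 0) = 0 := (hε'k _ _).2 ⟨𝟙 _, (Category.comp_id _).symm⟩
      have h2 : ε.app (B 1) (p0 ≫ β 0) = 0 := by rw [← hp0]; exact hε'β
      obtain ⟨p1, hp1⟩ := (hεk _ _).1 h2
      have h3 : ε.app (A 0) (𝟙 (A 0) - p0 ≫ q0) = 0 := by
        erw [map_sub (ConcreteCategory.hom (ε.app (A 0))) (𝟙 (A 0)) (p0 ≫ q0)]; erw [← hp0 _ q0, hq0 _ (𝟙 (A 0)), Category.comp_id, sub_self]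
      obtain ⟨k0, hk0⟩ := (hεk _ _).1 h3
      refine ⟨q0, q1, p0, p1, k0, hq1.symm, hp1.symm, ?_⟩
      have e1 : α 0 ≫ p1 ≫ q1 = p0 ≫ q0 ≫ α 0 := by
        rw [← Category.assoc, ← hp1, Category.assoc, ← hq1, ← Category.assoc, Category.assoc]
      have e2 : α 0 ≫ k0 ≫ α 0 = α 0 - p0 ≫ q0 ≫ α 0 := by
        rw [← Category.assoc, ← hk0, Preadditive.sub_comp, Category.id_comp, Category.assoc]
      simp only [Preadditive.comp_sub, Category.comp_id, e1, e2]
      abel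
    | succ j ih =>
      intro hj
      obtain ⟨q, q', p, p', k, ha, hc, hb⟩ := ih (by omega)
      have hαα : α j ≫ α (j+1) = 0 :=
        (hS j (by omega) _ (α (j+1))).2 ⟨𝟙 _, (Category.comp_id _).symm⟩
      have hββ : β j ≫ β (j+1) = 0 :=
        (hB j (by omega) _ (β (j+1))).2 ⟨𝟙 _, (Category.comp_id _).symm⟩
      have h1 : β j ≫ (q' ≫ α (j+1)) = 0 := by
        rw [← Category.assoc, ha, Category.assoc, hαα, Limits.comp_zero]
      obtain ⟨q'', hq''⟩ := (hB j (by omega) _ _).1 h1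
      have h2 : α j ≫ (p' ≫ β (j+1)) = 0 := by
        rw [← Category.assoc, hc, Category.assoc, hββ, Limits.comp_zero]
      obtain ⟨p'', hp''⟩ := (hS j (by omega) _ _).1 h2
      obtain ⟨k', hk'⟩ := (hS j (by omega) _ _).1 hb
      refine ⟨q', q'', p', p'', k', hq''.symm, hp''.symm, ?_⟩
      have e1 : α (j+1) ≫ p'' ≫ q'' = p' ≫ q' ≫ α (j+1) := by
        rw [← Category.assoc, ← hp'', Category.assoc, ← hq'', ← Category.assoc, Category.assoc]
      have e2 : α (j+1) ≫ k' ≫ α (j+1) = α (j+1) - p' ≫ q' ≫ α (j+1) := by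
        rw [← Category.assoc, ← hk']
        simp only [Preadditive.sub_comp, Category.id_comp, Category.assoc, hαα,
          Limits.comp_zero, sub_zero]
      simp only [Preadditive.comp_sub, Category.comp_id, e1, e2]
      abel
  obtain ⟨q, q', p, p', k, ha, hc, hb⟩ := J m le_rfl
  have : HasBinaryBiproducts 𝒜 := hasBinaryBiproducts_of_finite_biproducts _
  have hββ : β m ≫ β (m+1) = 0 :=
    (hB m le_rfl _ (β (m+1))).2 ⟨𝟙 _, (Category.comp_id _).symm⟩
  refine ⟨A (m+1) ⊞ B (m+2),
    biprod.lift (𝟙 (A (m+1)) - p' ≫ q' - k ≫ α m) (p' ≫ β (m+1)), fun Z u => ?_⟩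
  constructor
  · intro hu
    have h1 : β m ≫ q' ≫ u = 0 := by
      rw [← Category.assoc, ha, Category.assoc, hu, Limits.comp_zero]
    obtain ⟨w, hw⟩ := (hB m le_rfl _ _).1 h1
    refine ⟨biprod.desc u w, ?_⟩
    rw [biprod.lift_desc, Category.assoc, ← hw]
    simp only [Preadditive.sub_comp, Category.id_comp, Category.assoc, hu,
      Limits.comp_zero, sub_zero]
    abel
  · rintro ⟨v, rfl⟩
    have h0 : α m ≫ biprod.lift (𝟙 (A (m+1)) - p' ≫ q' - k ≫ α m) (p' ≫ β (m+1)) = 0 := by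
      apply biprod.hom_ext
      · rw [Category.assoc, biprod.lift_fst, Limits.zero_comp]
        exact hb
      · rw [Category.assoc, biprod.lift_snd, Limits.zero_comp, ← Category.assoc,
          hc, Category.assoc, hββ, Limits.comp_zero]
    rw [← Category.assoc, h0, Limits.zero_comp]

end Main


section Glue

lemma assemble (m : ℕ) : ∀ (A : ℕ → 𝒜) (α : ∀ j, A j ⟶ A (j+1)) (V : 𝒜) (t : A (m+1) ⟶ V),
    (∀ j, j + 1 ≤ m → ∀ (Z : 𝒜) (u : A (j+1) ⟶ Z),
      α j ≫ u = 0 ↔ ∃ v : A (j+2) ⟶ Z, u = α (j+1) ≫ v) →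
    (∀ (Z : 𝒜) (u : A (m+1) ⟶ Z), α m ≫ u = 0 ↔ ∃ v : V ⟶ Z, u = t ≫ v) →
    HasPseudoCoker 𝒜 (m+1) (α 0) := by
  induction m with
  | zero =>
    intro A α V t _ ht
    exact Or.inr ⟨fun _ => V, t, fun _ => 𝟙 V, ht, fun h => absurd h (by omega),
      fun i hi => absurd hi (by omega)⟩
  | succ m ih =>
    intro A α V t hS ht
    have IH := ih (fun j => A (j+1)) (fun j => α (j+1)) V t
      (fun j hj Z u => hS (j+1) (by omega) Z u) ht
    obtain h0 | ⟨U, e₀, e, hu1, hu2, hu3⟩ := IH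
    · exact absurd h0 (by omega)
    refine Or.inr ⟨ch1 (A 2) U, α 1, ch1map e₀ e, fun Z u => hS 0 (by omega) Z u,
      fun _ Z u => hu1 Z u, ?_⟩
    intro i
    match i with
    | 0 => intro hi Z u; exact hu2 (by omega) Z u
    | (i+1) => intro hi Z u; exact hu3 i (by omega) Z u

lemma forward_core (m : ℕ)
    (coh : ∀ F : 𝒜 ⥤ AddCommGrpCat.{u}, F.Additive →
      FunctorIsFPn 𝒜 (m+1) F → FunctorIsFPn 𝒜 (m+2) F)
    (A : ℕ → 𝒜) (α : ∀ j, A j ⟶ A (j+1))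
    (hS : ∀ j, j + 1 ≤ m → ∀ (Z : 𝒜) (u : A (j+1) ⟶ Z),
      α j ≫ u = 0 ↔ ∃ v : A (j+2) ⟶ Z, u = α (j+1) ≫ v) :
    HasPseudoCoker 𝒜 (m+1) (α 0) := by
  have hFP : FunctorIsFPn 𝒜 (m+1) (cokF (α 0)) :=
    ⟨A, α, proj (α 0), proj_surj _, fun _ Z u => proj_ker (α 0) Z u,
      fun s hs Z u => hS s (by omega) Z u⟩
  obtain ⟨B, β, ε', hs', hk', hx'⟩ := coh _ (cokF_additive _) hFP
  obtain ⟨V, t, ht⟩ := main_comparison m A α B β (proj (α 0)) ε' (proj_surj _)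
    (fun Z u => proj_ker (α 0) Z u) hs' (fun Z u => hk' (by omega) Z u)
    hS (fun j hj Z u => hx' j (by omega) Z u)
  exact assemble m A α V t hS ht

lemma backward_core (m : ℕ)
    (hyp : ∀ (Y X : 𝒜) (f : Y ⟶ X), HasPseudoCoker 𝒜 m f → HasPseudoCoker 𝒜 (m+1) f)
    (F : 𝒜 ⥤ AddCommGrpCat.{u}) (hFP : FunctorIsFPn 𝒜 (m+1) F) : FunctorIsFPn 𝒜 (m+2) F := by
  obtain ⟨Xc, g, ε, hs, hk, hx⟩ := hFP
  have hpc0 : HasPseudoCoker 𝒜 m (g 0) := by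
    rcases Nat.eq_zero_or_pos m with rfl | hm
    · exact Or.inl rfl
    · exact Or.inr ⟨fun j => Xc (j+2), g 1, fun j => g (j+2),
        fun Z u => hx 0 (by omega) Z u,
        fun h2 Z u => hx 1 (by omega) Z u,
        fun i hi Z u => hx (i+2) (by omega) Z u⟩
  obtain h0 | ⟨W, d₀, d, h1, h2, h3⟩ := hyp _ _ (g 0) hpc0
  · exact absurd h0 (by omega)
  refine ⟨ch1 (Xc 0) (ch1 (Xc 1) W), ch1map (g 0) (ch1map d₀ d), ε, hs,
    fun _ Z u => hk (by omega) Z u, ?_⟩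
  intro s
  match s with
  | 0 => intro hs' Z u; exact h1 Z u
  | 1 => intro hs' Z u; exact h2 (by omega) Z u
  | (i+2) => intro hs' Z u; exact h3 i (by omega) Z u

end Glue

end PCAux
/-- For a small additive category `𝒜` and `n ≥ 1`, the functor category
`Add(𝒜, Ab)` is `n`-coherent (every object of type `FPₙ` is of type `FP_{n+1}`) if and only
if every morphism of `𝒜` having a pseudo `(n-1)`-cokernel has a pseudo `n`-cokernel. -/
theorem functor_category_n_coherent_iff_pseudo_cokernels (n : ℕ) (hn : 1 ≤ n) :
    (∀ F : 𝒜 ⥤ AddCommGrpCat.{u}, F.Additive →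
      FunctorIsFPn 𝒜 n F → FunctorIsFPn 𝒜 (n + 1) F) ↔
    (∀ (Y X : 𝒜) (f : Y ⟶ X),
      HasPseudoCoker 𝒜 (n - 1) f → HasPseudoCoker 𝒜 n f) := by
  obtain ⟨m, rfl⟩ : ∃ m, n = m + 1 := ⟨n - 1, by omega⟩
  constructor
  · intro coh Y X f hpc
    have hpc' : HasPseudoCoker 𝒜 m f := by simpa using hpc
    obtain rfl | ⟨W, d₀, d, h1, h2, h3⟩ := hpc'
    · exact PCAux.forward_core 0 coh (PCAux.ch1 Y (PCAux.ch1 X fun _ => X))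
        (PCAux.ch1map f (PCAux.ch1map (𝟙 X) fun _ => 𝟙 X))
        (fun j hj => absurd hj (by omega))
    · refine PCAux.forward_core m coh (PCAux.ch1 Y (PCAux.ch1 X W))
        (PCAux.ch1map f (PCAux.ch1map d₀ d)) ?_
      intro j
      match j with
      | 0 => intro hj Z u; exact h1 Z u
      | 1 => intro hj Z u; exact h2 (by omega) Z u
      | (i+2) => intro hj Z u; exact h3 i (by omega) Z u
  · intro hyp F _ hFP
    refine PCAux.backward_core m (fun Y X f h => hyp Y X f ?_) F hFP
    simpa using h
end

section
/- A ring R with identity is left semi-hereditary if and only if for every matrix A ∈ M_{k×m}(R) there exists a matrix B ∈ M_{t×k}(R) such that: (a) for every row vector X ∈ M_{1×k}(R), XA = 0 iff X = YB for some Y ∈ M_{1×t}(R); and (b) there exists C ∈ M_{k×k}(R) with BC = 0 and CA = A. -/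
universe u

open Matrix

lemma vecMul_ofLinear {R : Type u} [Ring R] {k n : ℕ}
    (π : (Fin k → R) →ₗ[R] (Fin n → R)) (x : Fin k → R) :
    x ᵥ* (Matrix.of fun i j => π (Pi.single i 1) j) = π x := by
  have hx : x = ∑ i, x i • (Pi.single i 1 : Fin k → R) := by
    funext j
    simp [Pi.single_apply, Finset.sum_apply, mul_ite]
  conv_rhs => rw [hx]
  rw [map_sum]
  funext j
  simp [Matrix.vecMul, dotProduct, Finset.sum_apply]

lemma matrix_ext_of_vecMul {R : Type u} [Ring R] {k n : ℕ} {M N : Matrix (Fin k) (Fin n) R}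
    (h : ∀ x, x ᵥ* M = x ᵥ* N) : M = N := by
  ext i j
  have := congrFun (h (Pi.single i 1)) j
  simpa [Matrix.single_one_vecMul] using this

lemma row_mul_eq_vecMul {R : Type u} [Ring R] {k n : ℕ} (X : Matrix (Fin 1) (Fin k) R)
    (M : Matrix (Fin k) (Fin n) R) (j : Fin n) : (X * M) 0 j = (X 0 ᵥ* M) j := by
  simp [Matrix.mul_apply, Matrix.vecMul, dotProduct]

/-- A ring `R` is left semi-hereditary if every finitely generated submodule of a finitely
generated free left `R`-module is projective. -/
def IsLeftSemihereditary (R : Type u) [Ring R] : Prop :=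
  ∀ (m : ℕ) (N : Submodule R (Fin m → R)), N.FG → Module.Projective R N

/-- A ring `R` with identity is left semi-hereditary if and only if for every
matrix `A ∈ M_{k×m}(R)` there is a matrix `B ∈ M_{t×k}(R)` such that (a) a row vector `X`
satisfies `XA = 0` iff `X = YB` for some row vector `Y`, and (b) there is `C ∈ M_{k×k}(R)`
with `BC = 0` and `CA = A`. -/
theorem isLeftSemihereditary_iff_matrix_condition (R : Type u) [Ring R] :
    IsLeftSemihereditary R ↔
    ∀ (k m : ℕ) (A : Matrix (Fin k) (Fin m) R),
      ∃ (t : ℕ) (B : Matrix (Fin t) (Fin k) R),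
        (∀ X : Matrix (Fin 1) (Fin k) R,
          X * A = 0 ↔ ∃ Y : Matrix (Fin 1) (Fin t) R, X = Y * B) ∧
        ∃ Cm : Matrix (Fin k) (Fin k) R, B * Cm = 0 ∧ Cm * A = A := by
  constructor
  · intro hR k m A
    set f := A.vecMulLinear with hf
    have hfg : (LinearMap.range f).FG := by
      rw [hf, range_vecMulLinear]
      exact Submodule.fg_span (Set.finite_range _)
    have hproj : Module.Projective R (LinearMap.range f) := hR m _ hfg
    set s : (Fin k → R) →ₗ[R] LinearMap.range f := f.rangeRestrict with hsdef
    have hs : Function.Surjective s := f.surjective_rangeRestrict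
    obtain ⟨σ, hσ⟩ := Module.projective_lifting_property s LinearMap.id hs
    set π : (Fin k → R) →ₗ[R] (Fin k → R) := σ.comp s with hπ
    have hsσ : ∀ y, s (σ y) = y := fun y => LinearMap.congr_fun hσ y
    set C : Matrix (Fin k) (Fin k) R := Matrix.of fun i j => π (Pi.single i 1) j with hCdef
    have hC : ∀ x, x ᵥ* C = π x := vecMul_ofLinear π
    have hval : ∀ x, (π x) ᵥ* A = x ᵥ* A := by
      intro x
      have h1 : s (π x) = s x := hsσ (s x)
      have := congrArg Subtype.val h1
      simpa [hsdef, hf] using this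
    have hCC : C * C = C := by
      apply matrix_ext_of_vecMul
      intro x
      rw [← Matrix.vecMul_vecMul, hC, hC]
      show σ (s (σ (s x))) = σ (s x)
      rw [hsσ]
    have hCA : C * A = A := by
      apply matrix_ext_of_vecMul
      intro x
      rw [← Matrix.vecMul_vecMul, hC]
      exact hval x
    refine ⟨k, 1 - C, ?_, C, by rw [sub_mul, one_mul, hCC, sub_self], hCA⟩
    intro X
    constructor
    · intro hXA
      refine ⟨X, ?_⟩
      have hxA : (X 0) ᵥ* A = 0 := by
        funext j
        have := congrFun (congrFun hXA 0) j
        rw [← row_mul_eq_vecMul X A j]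
        simpa using this
      have hsx : s (X 0) = 0 := by
        apply Subtype.ext
        simpa [hsdef, hf] using hxA
      have hpix : π (X 0) = 0 := by
        rw [hπ]; show σ (s (X 0)) = 0
        rw [hsx, map_zero]
      have hXC : X * C = 0 := by
        ext i j
        have hi : i = 0 := Subsingleton.elim i 0
        subst hi
        rw [row_mul_eq_vecMul, hC, hpix]
        simp
      rw [Matrix.mul_sub, Matrix.mul_one, hXC, sub_zero]
    · rintro ⟨Y, rfl⟩
      rw [Matrix.mul_assoc, Matrix.sub_mul, Matrix.one_mul, hCA, sub_self, Matrix.mul_zero]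
  · intro h m N hfg
    obtain ⟨k, v, hv⟩ := Submodule.fg_iff_exists_fin_generating_family.mp hfg
    set A : Matrix (Fin k) (Fin m) R := Matrix.of v with hA
    have hN : LinearMap.range A.vecMulLinear = N := by
      rw [range_vecMulLinear]; exact hv
    obtain ⟨t, B, ha, C, hBC, hCA⟩ := h k m A
    rw [← hN]
    set f := A.vecMulLinear with hf
    set s := f.rangeRestrict with hsdef
    have hs : Function.Surjective s := f.surjective_rangeRestrict
    set g : (Fin k → R) →ₗ[R] (Fin k → R) := C.vecMulLinear with hg
    have hle : LinearMap.ker s ≤ LinearMap.ker g := by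
      intro x hx
      have hxA : x ᵥ* A = 0 := by
        have h0 : s x = 0 := hx
        have := congrArg Subtype.val h0
        simpa [hsdef, hf] using this
      set X : Matrix (Fin 1) (Fin k) R := Matrix.of fun _ => x with hX
      have hXA : X * A = 0 := by
        ext i j
        have hi : i = 0 := Subsingleton.elim i 0
        subst hi
        rw [row_mul_eq_vecMul]
        show (x ᵥ* A) j = 0
        rw [hxA]; rfl
      obtain ⟨Y, hY⟩ := (ha X).mp hXA
      have hx' : x = (Y 0) ᵥ* B := by
        funext j
        have := congrFun (congrFun hY 0) j
        rw [row_mul_eq_vecMul] at this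
        exact this
      show g x = 0
      rw [hg]
      show x ᵥ* C = 0
      rw [hx', Matrix.vecMul_vecMul, hBC]
      funext j
      simp [Matrix.vecMul, dotProduct]
    set e := LinearMap.quotKerEquivOfSurjective s hs with he
    set i : ↥(LinearMap.range f) →ₗ[R] (Fin k → R) :=
      ((LinearMap.ker s).liftQ g hle).comp e.symm.toLinearMap with hi
    refine Module.Projective.of_split i s ?_
    apply LinearMap.ext
    intro n
    obtain ⟨x, rfl⟩ := hs n
    have hmk : e.symm (s x) = Submodule.Quotient.mk x := by
      rw [LinearEquiv.symm_apply_eq]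
      rfl
    have : i (s x) = x ᵥ* C := by
      rw [hi]
      show ((LinearMap.ker s).liftQ g hle) (e.symm (s x)) = x ᵥ* C
      rw [hmk]
      rfl
    rw [LinearMap.comp_apply, this]
    apply Subtype.ext
    show ((x ᵥ* C) ᵥ* A : Fin m → R) = (s x : Fin m → R)
    rw [Matrix.vecMul_vecMul, hCA]
    rfl
end
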